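/- arXiv:0711.2844 — 7 statements merged into one kernel-verified Lean document; each statement's English description precedes it below -/
import Mathlib

section
/- For the cycle C_n on n ≥ 3 vertices, the dynamic chromatic number is χ_d(C_n) = 3 if n is a multiple of 3, χ_d(C_5) = 5, and χ_d(C_n) = 4 for all other n. -/
open SimpleGraph

/-- A dynamic `k`-coloring of `G`: a proper vertex coloring such that every vertex
with at least two neighbors sees at least two distinct colors among its neighbors. -/
def IsDynamicColoring {V : Type*} (G : SimpleGraph V) (k : ℕ) (c : V → Fin k) : Prop :=
  (∀ ⦃u v : V⦄, G.Adj u v → c u ≠ c v) ∧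
  ∀ v : V, 2 ≤ (G.neighborSet v).ncard →
    ∃ u w : V, G.Adj v u ∧ G.Adj v w ∧ c u ≠ c w

/-- The dynamic chromatic number: the least `k` admitting a dynamic `k`-coloring. -/
noncomputable def dynamicChromaticNumber {V : Type*} (G : SimpleGraph V) : ℕ :=
  sInf {k : ℕ | ∃ c : V → Fin k, IsDynamicColoring G k c}

section Aux

variable {m : ℕ}

open scoped Fin.CommRing Fin.NatCast

private lemma cg_adj {u v : Fin (m + 3)} :
    (cycleGraph (m + 3)).Adj u v ↔ u = v + 1 ∨ v = u + 1 := by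
  have h := cycleGraph_adj (n := m + 1) (u := u) (v := v)
  rw [sub_eq_iff_eq_add, sub_eq_iff_eq_add] at h
  exact h.trans (by rw [add_comm (1 : Fin (m+3)) v, add_comm (1 : Fin (m+3)) u])

private lemma val1 : (1 : Fin (m + 3)).val = 1 := Fin.val_one (m + 1)

private lemma val2 : (2 : Fin (m + 3)).val = 2 := by
  have h : (2 : Fin (m + 3)).val = 2 % (m + 3) := rfl
  rw [h]; exact Nat.mod_eq_of_lt (by omega)

private lemma fin_two_ne_zero : (2 : Fin (m + 3)) ≠ 0 := by
  intro h
  have := congrArg Fin.val h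
  rw [val2] at this
  simp at this

private lemma two_le_ncard (v : Fin (m + 3)) :
    2 ≤ ((cycleGraph (m + 3)).neighborSet v).ncard := by
  have h : (cycleGraph (m + 3)).neighborSet v = {v - 1, v + 1} :=
    cycleGraph_neighborSet (n := m + 1)
  have hne : v - 1 ≠ v + 1 := by
    intro he
    apply fin_two_ne_zero (m := m)
    calc (2 : Fin (m+3)) = (v + 1) - (v - 1) := by ring
    _ = (v + 1) - (v + 1) := by rw [he]
    _ = 0 := by ring
  rw [h, Set.ncard_pair hne]

private lemma dyn_d1d2 {k : ℕ} {c : Fin (m + 3) → Fin k}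
    (h : IsDynamicColoring (cycleGraph (m + 3)) k c) :
    (∀ v, c v ≠ c (v + 1)) ∧ (∀ v, c v ≠ c (v + 2)) := by
  obtain ⟨h1, h2⟩ := h
  have d1 : ∀ v : Fin (m+3), c v ≠ c (v + 1) :=
    fun v => h1 (cg_adj.2 (Or.inr rfl))
  have dd : ∀ v : Fin (m + 3), c (v - 1) ≠ c (v + 1) := by
    intro v
    obtain ⟨u, w, hu, hw, hne⟩ := h2 v (two_le_ncard v)
    have mem : ∀ x, (cycleGraph (m + 3)).Adj v x → x = v - 1 ∨ x = v + 1 := by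
      intro x hx
      rcases cg_adj.1 hx with h | h
      · left; rw [eq_sub_iff_add_eq]; exact h.symm
      · right; exact h
    rcases mem u hu with rfl | rfl <;> rcases mem w hw with rfl | rfl
    · exact absurd rfl hne
    · exact hne
    · exact hne.symm
    · exact absurd rfl hne
  refine ⟨d1, fun v => ?_⟩
  have := dd (v + 1)
  rwa [show v + 1 - 1 = v by ring, show v + 1 + 1 = v + 2 by ring] at this

private lemma build {k : ℕ} {c : Fin (m + 3) → Fin k}
    (d1 : ∀ v, c v ≠ c (v + 1)) (d2 : ∀ v, c v ≠ c (v + 2)) :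
    IsDynamicColoring (cycleGraph (m + 3)) k c := by
  constructor
  · intro u v huv
    rcases cg_adj.1 huv with rfl | rfl
    · exact (d1 v).symm
    · exact d1 u
  · intro v _
    refine ⟨v - 1, v + 1, cg_adj.2 (Or.inl (by ring)), cg_adj.2 (Or.inr rfl), ?_⟩
    have := d2 (v - 1)
    rwa [show v - 1 + 2 = v + 1 by ring] at this

private lemma fin2_aux : ∀ x y z : Fin 2, x ≠ y → y ≠ z → x ≠ z → False := by decide

private lemma fin3_aux : ∀ x y a b : Fin 3,
    x ≠ a → x ≠ b → y ≠ a → y ≠ b → a ≠ b → x = y := by decide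

private lemma fin5_diff : ∀ d : Fin 5, d ≠ 0 → d = 1 ∨ d = 2 ∨ d = 3 ∨ d = 4 := by decide

private lemma mod_small (a n : ℕ) (h : a < 2 * n) (hn : 0 < n) :
    a % n = if a < n then a else a - n := by
  split
  · exact Nat.mod_eq_of_lt ‹_›
  · rw [Nat.mod_eq_sub_mod (by omega)]
    exact Nat.mod_eq_of_lt (by omega)

private lemma val_add_one (v : Fin (m + 3)) :
    (v + 1).val = if v.val + 1 < m + 3 then v.val + 1 else v.val + 1 - (m + 3) := by
  rw [Fin.val_add, val1, mod_small _ _ (by omega) (by omega)]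

private lemma val_add_two (v : Fin (m + 3)) :
    (v + 2).val = if v.val + 2 < m + 3 then v.val + 2 else v.val + 2 - (m + 3) := by
  rw [Fin.val_add, val2, mod_small _ _ (by omega) (by omega)]

private lemma no_three (hnd : ¬ 3 ∣ (m + 3)) (c : Fin (m + 3) → Fin 3)
    (d1 : ∀ v, c v ≠ c (v + 1)) (d2 : ∀ v, c v ≠ c (v + 2)) : False := by
  have step : ∀ v : Fin (m + 3), c (v + 3) = c v := by
    intro v
    refine fin3_aux (c (v + 3)) (c v) (c (v + 1)) (c (v + 2)) ?_ ?_ (d1 v) (d2 v) ?_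
    · have := d2 (v + 1)
      rw [show v + 1 + 2 = v + 3 by ring] at this
      exact this.symm
    · have := d1 (v + 2)
      rw [show v + 2 + 1 = v + 3 by ring] at this
      exact this.symm
    · have := d1 (v + 1)
      rwa [show v + 1 + 1 = v + 2 by ring] at this
  have iter : ∀ j : ℕ, c ((3 * j : ℕ) : Fin (m + 3)) = c 0 := by
    intro j
    induction j with
    | zero => norm_num
    | succ j ih =>
      have e : ((3 * (j + 1) : ℕ) : Fin (m + 3)) = ((3 * j : ℕ) : Fin (m + 3)) + 3 := by
        push_cast; ring
      rw [e, step, ih]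
  have hcop : Nat.Coprime 3 (m + 3) := (Nat.prime_three.coprime_iff_not_dvd).mpr hnd
  obtain ⟨j, -, hj⟩ := Nat.exists_mul_mod_eq_one_of_coprime hcop (by omega)
  have h1 : ((3 * j : ℕ) : Fin (m + 3)) = 1 := by
    rw [Fin.ext_iff, Fin.val_natCast, val1]
    exact hj
  have := iter j
  rw [h1] at this
  exact d1 0 (by rw [zero_add]; exact this.symm)

private lemma no_five (c : Fin 5 → Fin 4)
    (d1 : ∀ v, c v ≠ c (v + 1)) (d2 : ∀ v, c v ≠ c (v + 2)) : False := by
  have d3 : ∀ v : Fin 5, c v ≠ c (v + 3) := by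
    intro v h
    have e : v + 3 + 2 = v := by rw [add_assoc, show (3 + 2 : Fin 5) = 0 by decide, add_zero]
    exact d2 (v + 3) (by rw [e]; exact h.symm)
  have d4 : ∀ v : Fin 5, c v ≠ c (v + 4) := by
    intro v h
    have e : v + 4 + 1 = v := by rw [add_assoc, show (4 + 1 : Fin 5) = 0 by decide, add_zero]
    exact d1 (v + 4) (by rw [e]; exact h.symm)
  have inj : Function.Injective c := by
    intro v w hc
    by_contra hne
    have hd : w - v ≠ 0 := sub_ne_zero.mpr (Ne.symm hne)
    have hw : w = v + (w - v) := by ring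
    rcases fin5_diff _ hd with h | h | h | h <;> rw [h] at hw <;> rw [hw] at hc
    · exact d1 v hc
    · exact d2 v hc
    · exact d3 v hc
    · exact d4 v hc
  have := Fintype.card_le_of_injective c inj
  simp at this

private lemma exists3 (hd : 3 ∣ (m + 3)) :
    ∃ c : Fin (m + 3) → Fin 3, (∀ v, c v ≠ c (v + 1)) ∧ (∀ v, c v ≠ c (v + 2)) := by
  refine ⟨fun v => ⟨v.val % 3, by omega⟩, fun v h => ?_, fun v h => ?_⟩
  · rw [Fin.mk.injEq, val_add_one] at h
    have := v.isLt
    split at h <;> omega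
  · rw [Fin.mk.injEq, val_add_two] at h
    have := v.isLt
    split at h <;> omega

private lemma exists4 (hnd : ¬ 3 ∣ (m + 3)) (h5 : m + 3 ≠ 5) :
    ∃ c : Fin (m + 3) → Fin 4, (∀ v, c v ≠ c (v + 1)) ∧ (∀ v, c v ≠ c (v + 2)) := by
  set n := m + 3
  set t := n - 4 * (n % 3) with htdef
  have hr : n % 3 = 1 ∨ n % 3 = 2 := by omega
  have hge : 4 * (n % 3) ≤ n := by omega
  have ht3 : t % 3 = 0 := by omega
  have htn : n = t + 4 * (n % 3) := by omega
  refine ⟨fun v => ⟨if v.val < t then v.val % 3 else (v.val - t) % 4, by split <;> omega⟩,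
    fun v h => ?_, fun v h => ?_⟩
  · rw [Fin.mk.injEq, val_add_one] at h
    have := v.isLt
    split_ifs at h <;> omega
  · rw [Fin.mk.injEq, val_add_two] at h
    have := v.isLt
    split_ifs at h <;> omega

private lemma sInf_eq' {S : Set ℕ} {k : ℕ} (hk : k ∈ S) (h : ∀ j ∈ S, k ≤ j) :
    sInf S = k :=
  le_antisymm (Nat.sInf_le hk) (le_csInf ⟨k, hk⟩ h)

end Aux

open scoped Fin.CommRing Fin.NatCast

/-- For the cycle `C_n` on `n ≥ 3` vertices: `χ_d(C_n) = 3` if `3 ∣ n`,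
`χ_d(C_5) = 5`, and `χ_d(C_n) = 4` otherwise. -/
theorem dynamic_chromatic_cycleGraph (n : ℕ) (hn : 3 ≤ n) :
    (3 ∣ n → dynamicChromaticNumber (cycleGraph n) = 3) ∧
    (n = 5 → dynamicChromaticNumber (cycleGraph n) = 5) ∧
    (¬ 3 ∣ n → n ≠ 5 → dynamicChromaticNumber (cycleGraph n) = 4) := by
  obtain ⟨m, rfl⟩ : ∃ m, n = m + 3 := ⟨n - 3, by omega⟩
  refine ⟨fun h3 => ?_, fun h5 => ?_, fun h3 h5 => ?_⟩
  · refine sInf_eq' ?_ ?_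
    · obtain ⟨c, d1, d2⟩ := exists3 h3
      exact ⟨c, build d1 d2⟩
    · rintro j ⟨c, hc⟩
      by_contra hlt
      push_neg at hlt
      obtain ⟨d1, d2⟩ := dyn_d1d2 hc
      set c' : Fin (m + 3) → Fin 2 := fun v => Fin.castLE (by omega) (c v) with hc'
      have d1' : ∀ v, c' v ≠ c' (v + 1) :=
        fun v h => d1 v (Fin.castLE_injective _ h)
      have d2' : ∀ v, c' v ≠ c' (v + 2) :=
        fun v h => d2 v (Fin.castLE_injective _ h)
      refine fin2_aux (c' 0) (c' 1) (c' 2) ?_ ?_ ?_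
      · have := d1' 0; rwa [zero_add] at this
      · have := d1' 1; rwa [one_add_one_eq_two] at this
      · have := d2' 0; rwa [zero_add] at this
  · have hm : m = 2 := by omega
    subst hm
    refine sInf_eq' ?_ ?_
    · exact ⟨id, build (m := 2) (by decide) (by decide)⟩
    · rintro j ⟨c, hc⟩
      by_contra hlt
      push_neg at hlt
      obtain ⟨d1, d2⟩ := dyn_d1d2 hc
      set c' : Fin (2 + 3) → Fin 4 := fun v => Fin.castLE (by omega) (c v) with hc'
      have d1' : ∀ v, c' v ≠ c' (v + 1) :=
        fun v h => d1 v (Fin.castLE_injective _ h)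
      have d2' : ∀ v, c' v ≠ c' (v + 2) :=
        fun v h => d2 v (Fin.castLE_injective _ h)
      exact no_five c' d1' d2'
  · refine sInf_eq' ?_ ?_
    · obtain ⟨c, d1, d2⟩ := exists4 h3 h5
      exact ⟨c, build d1 d2⟩
    · rintro j ⟨c, hc⟩
      by_contra hlt
      push_neg at hlt
      obtain ⟨d1, d2⟩ := dyn_d1d2 hc
      set c' : Fin (m + 3) → Fin 3 := fun v => Fin.castLE (by omega) (c v) with hc'
      have d1' : ∀ v, c' v ≠ c' (v + 1) :=
        fun v h => d1 v (Fin.castLE_injective _ h)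
      have d2' : ∀ v, c' v ≠ c' (v + 2) :=
        fun v h => d2 v (Fin.castLE_injective _ h)
      exact no_three h3 c' d1' d2'
end

section
/- If every vertex of degree at least 2 in a graph G is contained in a triangle of G, then every proper k-coloring of G is a dynamic k-coloring; consequently χ_d(G) = χ(G). -/
open SimpleGraph

/-- If every vertex of degree at least 2 in `G` lies in a triangle, then every proper
`k`-coloring of `G` is a dynamic `k`-coloring; consequently `χ_d(G) = χ(G)`. -/
theorem dynamic_chromatic_eq_chromatic_of_triangles {V : Type*} [Fintype V]
    (G : SimpleGraph V)
    (h : ∀ v : V, 2 ≤ (G.neighborSet v).ncard →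
      ∃ a b : V, G.Adj v a ∧ G.Adj v b ∧ G.Adj a b) :
    (∀ (k : ℕ) (c : V → Fin k), (∀ ⦃u w : V⦄, G.Adj u w → c u ≠ c w) →
      IsDynamicColoring G k c) ∧
    (dynamicChromaticNumber G : ℕ∞) = G.chromaticNumber := by
  have main : ∀ (k : ℕ) (c : V → Fin k), (∀ ⦃u w : V⦄, G.Adj u w → c u ≠ c w) →
      IsDynamicColoring G k c := by
    intro k c hc
    refine ⟨hc, fun v hv => ?_⟩
    obtain ⟨a, b, hva, hvb, hab⟩ := h v hv
    exact ⟨a, b, hva, hvb, hc hab⟩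
  refine ⟨main, ?_⟩
  have hset : {k : ℕ | ∃ c : V → Fin k, IsDynamicColoring G k c} =
      {k : ℕ | G.Colorable k} := by
    ext k
    constructor
    · rintro ⟨c, hc, -⟩
      exact ⟨⟨c, fun {u w} hadj => hc hadj⟩⟩
    · rintro ⟨C⟩
      exact ⟨C, main k C (fun _ _ hadj => C.valid hadj)⟩
  rw [dynamicChromaticNumber, hset,
    (G.colorable_of_fintype).chromaticNumber_eq_sInf]
end

section
/- If G is a connected graph with maximum degree at most 3 that is not isomorphic to K_4 and in which every vertex is contained in a triangle, then χ_d(G) ≤ 3. -/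
open SimpleGraph

set_option linter.unusedSectionVars false

section Helpers

lemma fin3_pick (s : Finset (Fin 3)) (h : s.card ≤ 2) : ∃ x, x ∉ s := by
  by_contra hc
  push_neg at hc
  have : (Finset.univ : Finset (Fin 3)) ⊆ s := fun x _ => hc x
  have := Finset.card_le_card this
  simp at this
  omega

lemma fin3_rainbow (t1 t2 t3 : Fin 3) (h : ¬(t1 = t2 ∧ t2 = t3)) :
    ∃ d1 d2 d3 : Fin 3, d1 ≠ d2 ∧ d1 ≠ d3 ∧ d2 ≠ d3 ∧ d1 ≠ t1 ∧ d2 ≠ t2 ∧ d3 ≠ t3 := by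
  revert h; revert t1 t2 t3; decide

lemma fin3_diamond (t1 t2 : Fin 3) :
    ∃ x y z : Fin 3, x ≠ y ∧ x ≠ z ∧ y ≠ z ∧ x ≠ t1 ∧ x ≠ t2 := by
  revert t1 t2; decide

lemma fin3_other (t : Fin 3) : ∃ a : Fin 3, a ≠ t := by revert t; decide

variable {V : Type*}

lemma ncard_pair_le {a b : V} {s : Set V} (hab : a ≠ b) (ha : a ∈ s) (hb : b ∈ s)
    (hfin : s.Finite) : 2 ≤ s.ncard := by
  have h : ({a, b} : Set V) ⊆ s := by
    intro x hx; rcases hx with rfl | rfl; exact ha; exact hb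
  calc 2 = ({a, b} : Set V).ncard := by
        rw [Set.ncard_insert_of_notMem (by simpa using hab), Set.ncard_singleton]
    _ ≤ s.ncard := Set.ncard_le_ncard h hfin

lemma ncard_triple_le {a b c : V} {s : Set V} (hab : a ≠ b) (hac : a ≠ c) (hbc : b ≠ c)
    (ha : a ∈ s) (hb : b ∈ s) (hc : c ∈ s) (hfin : s.Finite) : 3 ≤ s.ncard := by
  have h : ({a, b, c} : Set V) ⊆ s := by
    intro x hx; rcases hx with rfl | rfl | rfl; exact ha; exact hb; exact hc
  have h3 : ({a, b, c} : Set V).ncard = 3 := by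
    rw [Set.ncard_insert_of_notMem (by simp [hab, hac]) (Set.toFinite _),
      Set.ncard_insert_of_notMem (by simpa using hbc) (Set.toFinite _), Set.ncard_singleton]
  calc 3 = ({a, b, c} : Set V).ncard := h3.symm
    _ ≤ s.ncard := Set.ncard_le_ncard h hfin

lemma ncard_quad_le {a b c d : V} {s : Set V} (hab : a ≠ b) (hac : a ≠ c) (had : a ≠ d)
    (hbc : b ≠ c) (hbd : b ≠ d) (hcd : c ≠ d)
    (ha : a ∈ s) (hb : b ∈ s) (hc : c ∈ s) (hd : d ∈ s) (hfin : s.Finite) : 4 ≤ s.ncard := by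
  have h : ({a, b, c, d} : Set V) ⊆ s := by
    intro x hx; rcases hx with rfl | rfl | rfl | rfl
    exacts [ha, hb, hc, hd]
  have h4 : ({a, b, c, d} : Set V).ncard = 4 := by
    rw [Set.ncard_insert_of_notMem (by simp [hab, hac, had]) (Set.toFinite _),
      Set.ncard_insert_of_notMem (by simp [hbc, hbd]) (Set.toFinite _),
      Set.ncard_insert_of_notMem (by simpa using hcd) (Set.toFinite _), Set.ncard_singleton]
  calc 4 = ({a, b, c, d} : Set V).ncard := h4.symm
    _ ≤ s.ncard := Set.ncard_le_ncard h hfin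

/-- If `{a,b,c} ⊆ s` (distinct) and `s.ncard ≤ 3` then `s = {a,b,c}`. -/
lemma set_eq_triple {a b c : V} {s : Set V} (hab : a ≠ b) (hac : a ≠ c) (hbc : b ≠ c)
    (ha : a ∈ s) (hb : b ∈ s) (hc : c ∈ s) (hfin : s.Finite) (hcard : s.ncard ≤ 3) :
    s = {a, b, c} := by
  have h : ({a, b, c} : Set V) ⊆ s := by
    intro x hx; rcases hx with rfl | rfl | rfl; exact ha; exact hb; exact hc
  have h3 : ({a, b, c} : Set V).ncard = 3 := by
    rw [Set.ncard_insert_of_notMem (by simp [hab, hac]) (Set.toFinite _),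
      Set.ncard_insert_of_notMem (by simpa using hbc) (Set.toFinite _), Set.ncard_singleton]
  exact (Set.eq_of_subset_of_ncard_le h (le_trans hcard h3.symm.le) hfin).symm

lemma set_eq_pair {a b : V} {s : Set V} (hab : a ≠ b)
    (ha : a ∈ s) (hb : b ∈ s) (hfin : s.Finite) (hcard : s.ncard ≤ 2) :
    s = {a, b} := by
  have h : ({a, b} : Set V) ⊆ s := by
    intro x hx; rcases hx with rfl | rfl; exact ha; exact hb
  have h2 : ({a, b} : Set V).ncard = 2 := by
    rw [Set.ncard_insert_of_notMem (by simpa using hab) (Set.toFinite _), Set.ncard_singleton]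
  exact (Set.eq_of_subset_of_ncard_le h (le_trans hcard h2.symm.le) hfin).symm

end Helpers


section Main

variable {V : Type*} [Fintype V]

noncomputable def greedy (key : V → ℕ) (earl : V → Finset V)
    (hcard : ∀ v, (earl v).card ≤ 2)
    (hk : ∀ v, ∀ u ∈ earl v, key u < key v) (v : V) : Fin 3 :=
  Classical.choose (fin3_pick ((earl v).attach.image
      (fun u => greedy key earl hcard hk u.1))
    (le_trans Finset.card_image_le (by simpa using hcard v)))
termination_by key v
decreasing_by all_goals exact hk v u.1 u.2

lemma greedy_spec (key : V → ℕ) (earl : V → Finset V)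
    (hcard : ∀ v, (earl v).card ≤ 2)
    (hk : ∀ v, ∀ u ∈ earl v, key u < key v) :
    ∀ v, ∀ u ∈ earl v, greedy key earl hcard hk u ≠ greedy key earl hcard hk v := by
  intro v u hu heq
  have h := Classical.choose_spec (fin3_pick ((earl v).attach.image
      (fun u => greedy key earl hcard hk u.1))
    (le_trans Finset.card_image_le (by simpa using hcard v)))
  apply h
  have hv : greedy key earl hcard hk v = Classical.choose (fin3_pick ((earl v).attach.image
      (fun u => greedy key earl hcard hk u.1))
    (le_trans Finset.card_image_le (by simpa using hcard v))) := by
    rw [greedy]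
  rw [← hv, ← heq]
  exact Finset.mem_image.mpr ⟨⟨u, hu⟩, Finset.mem_attach _ _, rfl⟩

lemma exists_adj_dist_lt (G : SimpleGraph V) (hconn : G.Connected) {r v : V} (hne : v ≠ r) :
    ∃ w, G.Adj v w ∧ G.dist r w < G.dist r v := by
  obtain ⟨p, hp⟩ := (hconn v r).exists_walk_length_eq_dist
  obtain ⟨w, hadj, q, rfl⟩ := Walk.exists_eq_cons_of_ne hne p
  refine ⟨w, hadj, ?_⟩
  have h1 : G.dist r w ≤ q.length := by
    rw [G.dist_comm]
    exact SimpleGraph.dist_le q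
  have h2 : G.dist r v = q.length + 1 := by
    rw [G.dist_comm]; rw [← hp, Walk.length_cons]
  omega

lemma dist_lt_card (G : SimpleGraph V) [Fintype V] (r v : V) :
    G.dist r v < Fintype.card V := by
  classical
  have hpos : 0 < Fintype.card V := Fintype.card_pos_iff.mpr ⟨v⟩
  by_cases hreach : G.Reachable r v
  · obtain ⟨p, hp⟩ := hreach.exists_walk_length_eq_dist
    have := p.toPath.2.length_lt
    have h2 : G.dist r v ≤ (p.toPath : G.Walk r v).length := SimpleGraph.dist_le _
    omega
  · rw [SimpleGraph.dist_eq_zero_of_not_reachable hreach]; exact hpos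

lemma exists_proper_outside (G : SimpleGraph V) [Fintype V] (hconn : G.Connected)
    (hdeg : ∀ v, (G.neighborSet v).ncard ≤ 3) (S : Set V) (r : V) (hr : r ∉ S) :
    ∃ c : V → Fin 3, ∀ ⦃u v⦄, u ∈ S → v ∈ S → G.Adj u v → c u ≠ c v := by
  classical
  set n := Fintype.card V with hn
  have hn1 : 0 < n := Fintype.card_pos_iff.mpr ⟨r⟩
  set e := Fintype.equivFin V with he
  set key : V → ℕ := fun v => (e v : ℕ) + n * (n - G.dist r v) with hkey
  have hkeyinj : Function.Injective key := by
    intro u v huv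
    have h1 : (e u : ℕ) = key u % n := by
      simp only [hkey, Nat.add_mul_mod_self_left]
      exact (Nat.mod_eq_of_lt (e u).isLt).symm
    have h2 : (e v : ℕ) = key v % n := by
      simp only [hkey, Nat.add_mul_mod_self_left]
      exact (Nat.mod_eq_of_lt (e v).isLt).symm
    have : e u = e v := by rw [Fin.ext_iff, h1, h2, huv]
    exact e.injective this
  have hkeymono : ∀ {u v : V}, G.dist r u < G.dist r v → key v < key u := by
    intro u v hlt
    have hdu : G.dist r u < n := dist_lt_card G r u
    have hdv : G.dist r v < n := dist_lt_card G r v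
    calc key v < n + n * (n - G.dist r v) := by
          exact Nat.add_lt_add_right (e v).isLt _
      _ = n * (n - G.dist r v + 1) := by ring
      _ ≤ n * (n - G.dist r u) := Nat.mul_le_mul_left n (by omega)
      _ ≤ key u := Nat.le_add_left _ _
  set earl : V → Finset V := fun v =>
    if v ∈ S then (Set.toFinite {u | u ∈ S ∧ G.Adj v u ∧ key u < key v}).toFinset else ∅
    with hearl
  have hmem : ∀ {v u : V}, u ∈ earl v ↔ v ∈ S ∧ u ∈ S ∧ G.Adj v u ∧ key u < key v := by
    intro v u
    simp only [hearl]
    by_cases hv : v ∈ S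
    · simp only [if_pos hv, Set.Finite.mem_toFinset, Set.mem_setOf_eq]; tauto
    · simp [hv]
  have hcard : ∀ v, (earl v).card ≤ 2 := by
    intro v
    by_cases hv : v ∈ S
    · have hobt : ∃ w, w ∈ G.neighborSet v ∧ (w ∉ S ∨ key v < key w) := by
        by_cases hex : ∃ w, G.Adj v w ∧ w ∉ S
        · obtain ⟨w, hw1, hw2⟩ := hex
          exact ⟨w, hw1, Or.inl hw2⟩
        · push_neg at hex
          have hvr : v ≠ r := fun h => hr (h ▸ hv)
          obtain ⟨w, hadj, hlt⟩ := exists_adj_dist_lt G hconn hvr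
          exact ⟨w, hadj, Or.inr (hkeymono hlt)⟩
      obtain ⟨w, hw1, hw2⟩ := hobt
      have hss : {u | u ∈ S ∧ G.Adj v u ∧ key u < key v} ⊂ G.neighborSet v := by
        constructor
        · rintro u ⟨_, hu2, _⟩; exact hu2
        · intro habs
          have hwmem := habs hw1
          rcases hw2 with h | h
          · exact h hwmem.1
          · exact absurd hwmem.2.2 (by omega)
      have hlt := Set.ncard_lt_ncard hss (Set.toFinite _)
      have hle := hdeg v
      have : (earl v).card = {u | u ∈ S ∧ G.Adj v u ∧ key u < key v}.ncard := by
        rw [Set.ncard_eq_toFinset_card _ (Set.toFinite _)]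
        simp only [hearl, if_pos hv]
      omega
    · simp [hearl, hv]
  have hk : ∀ v, ∀ u ∈ earl v, key u < key v := fun v u hu => (hmem.mp hu).2.2.2
  refine ⟨greedy key earl hcard hk, ?_⟩
  intro u v hu hv hadj heq
  rcases lt_trichotomy (key u) (key v) with h | h | h
  · exact greedy_spec key earl hcard hk v u
      (hmem.mpr ⟨hv, hu, hadj.symm, h⟩) heq
  · exact G.ne_of_adj hadj (hkeyinj h)
  · exact greedy_spec key earl hcard hk u v
      (hmem.mpr ⟨hu, hv, hadj, h⟩) heq.symm

lemma walk_interior_endpoint (H : SimpleGraph V)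
    (hmax : ∀ v, (H.neighborSet v).ncard ≤ 2) :
    ∀ {b c : V} (P : H.Walk b c), P.IsPath →
      ∀ z ∈ P.support, ∀ u, H.Adj z u → u ∉ P.support → z = b ∨ z = c := by
  intro b c P
  induction P with
  | nil =>
    intro _ z hz u _ _
    left; simpa using hz
  | @cons b y c h q ih =>
    intro hP z hz u hadj hu
    rw [Walk.support_cons, List.mem_cons] at hz
    rcases hz with rfl | hz
    · exact Or.inl rfl
    · have hq : q.IsPath := hP.of_cons
      have hbq : b ∉ q.support := ((Walk.cons_isPath_iff h q).mp hP).2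
      have hu' : u ∉ q.support := fun hc =>
        hu (by rw [Walk.support_cons]; exact List.mem_cons_of_mem _ hc)
      rcases ih hq z hz u hadj hu' with rfl | rfl
      · by_cases hyc : z = c
        · exact Or.inr hyc
        · exfalso
          obtain ⟨y', h', q', rfl⟩ := Walk.exists_eq_cons_of_ne hyc q
          have hy'q : y' ∈ (Walk.cons h' q').support := by
            rw [Walk.support_cons]
            exact List.mem_cons_of_mem _ q'.start_mem_support
          have hby' : b ≠ y' := fun hh => hbq (hh ▸ hy'q)
          have hub : u ≠ b := fun hh =>
            hu (hh ▸ (Walk.cons h (Walk.cons h' q')).start_mem_support)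
          have huy' : u ≠ y' := fun hh => hu' (hh ▸ hy'q)
          have h3 : 3 ≤ (H.neighborSet z).ncard :=
            ncard_triple_le hby' hub.symm huy'.symm h.symm h' hadj (Set.toFinite _)
          have := hmax z
          omega
      · exact Or.inr rfl

lemma walk_interior_two (H : SimpleGraph V) :
    ∀ {b c : V} (P : H.Walk b c), P.IsPath →
      ∀ z ∈ P.support, z ≠ b → z ≠ c → 2 ≤ (H.neighborSet z).ncard := by
  intro b c P
  induction P with
  | nil => intro _ z hz hzb _; exact absurd (by simpa using hz) hzb
  | @cons b y c h q ih =>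
    intro hP z hz hzb hzc
    rw [Walk.support_cons, List.mem_cons] at hz
    rcases hz with rfl | hz
    · exact absurd rfl hzb
    · have hq : q.IsPath := hP.of_cons
      have hbq : b ∉ q.support := ((Walk.cons_isPath_iff h q).mp hP).2
      by_cases hzy : z = y
      · subst hzy
        obtain ⟨y', h', q', rfl⟩ := Walk.exists_eq_cons_of_ne hzc q
        have hy'q : y' ∈ (Walk.cons h' q').support := by
          rw [Walk.support_cons]
          exact List.mem_cons_of_mem _ q'.start_mem_support
        have hby' : b ≠ y' := fun hh => hbq (hh ▸ hy'q)
        exact ncard_pair_le hby' h.symm h' (Set.toFinite _)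
      · exact ih hq z hz hzy hzc

lemma path_endpoint_contra (H : SimpleGraph V) {b c u : V} (P : H.Walk b c) (hP : P.IsPath)
    (hbc : b ≠ c) (hdb : (H.neighborSet b).ncard ≤ 1) (hadj : H.Adj b u)
    (hu : u ∉ P.support) : False := by
  obtain ⟨y, h, q, rfl⟩ := Walk.exists_eq_cons_of_ne hbc P
  have hyq : y ∈ (Walk.cons h q).support := by
    rw [Walk.support_cons]
    exact List.mem_cons_of_mem _ q.start_mem_support
  have huy : u ≠ y := fun hh => hu (hh ▸ hyq)
  have h2 : 2 ≤ (H.neighborSet b).ncard :=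
    ncard_pair_le (s := H.neighborSet b) huy hadj h (Set.toFinite _)
  omega

lemma kempe_three (H : SimpleGraph V)
    (hmax : ∀ v, (H.neighborSet v).ncard ≤ 2)
    {x1 x2 x3 : V} (h12 : x1 ≠ x2) (h13 : x1 ≠ x3) (h23 : x2 ≠ x3)
    (d1 : (H.neighborSet x1).ncard ≤ 1) (d2 : (H.neighborSet x2).ncard ≤ 1)
    (d3 : (H.neighborSet x3).ncard ≤ 1)
    (hr2 : H.Reachable x1 x2) (hr3 : H.Reachable x1 x3) : False := by
  classical
  obtain ⟨w0⟩ := hr2.symm.trans hr3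
  set p : H.Walk x2 x3 := (w0.toPath : H.Walk x2 x3) with hpdef
  have hp : p.IsPath := w0.toPath.2
  have hx1 : x1 ∉ p.support := by
    intro hmem
    have := walk_interior_two H p hp x1 hmem h12 h13
    omega
  obtain ⟨W⟩ := hr2
  obtain ⟨d, _, hd1, hd2⟩ := W.exists_boundary_dart {v | v ∉ p.support} hx1
    (fun hc => hc p.start_mem_support)
  simp only [Set.mem_setOf_eq, not_not] at hd1 hd2
  have hz := walk_interior_endpoint H hmax p hp d.snd hd2 d.fst d.adj.symm hd1
  rcases hz with hz | hz
  · exact path_endpoint_contra H p hp h23 (hz ▸ d2) (hz ▸ d.adj.symm) hd1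
  · refine path_endpoint_contra H p.reverse (hp.reverse) h23.symm (hz ▸ d3) (hz ▸ d.adj.symm) ?_
    rw [Walk.support_reverse, List.mem_reverse]
    exact hd1

def kempeGraph (G : SimpleGraph V) (S : Set V) (c : V → Fin 3) (t a : Fin 3) :
    SimpleGraph V where
  Adj u w := G.Adj u w ∧ u ∈ S ∧ w ∈ S ∧ (c u = t ∨ c u = a) ∧ (c w = t ∨ c w = a)
  symm := ⟨by rintro u w ⟨h1, h2, h3, h4, h5⟩; exact ⟨h1.symm, h3, h2, h5, h4⟩⟩
  loopless := ⟨fun v h => G.loopless.irrefl v h.1⟩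

lemma fin3_swap_inj (t a b1 b2 : Fin 3)
    (h : (if b1 = t then a else if b1 = a then t else b1)
       = (if b2 = t then a else if b2 = a then t else b2)) : b1 = b2 := by
  revert h; revert t a b1 b2; decide

lemma kempe_swap (G : SimpleGraph V) (S : Set V) (c : V → Fin 3)
    (hproper : ∀ ⦃u v⦄, u ∈ S → v ∈ S → G.Adj u v → c u ≠ c v)
    (t a : Fin 3) (hta : t ≠ a) (x1 : V) (hx1S : x1 ∈ S) (hx1 : c x1 = t) :
    ∃ c' : V → Fin 3,
      (∀ ⦃u v⦄, u ∈ S → v ∈ S → G.Adj u v → c' u ≠ c' v) ∧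
      c' x1 = a ∧
      (∀ w, ¬ (kempeGraph G S c t a).Reachable x1 w → c' w = c w) := by
  classical
  set H := kempeGraph G S c t a with hH
  set sw : Fin 3 → Fin 3 := fun b => if b = t then a else if b = a then t else b with hsw
  set c' : V → Fin 3 := fun w => if H.Reachable x1 w then sw (c w) else c w with hc'
  have hqual : ∀ w, H.Reachable x1 w → (c w = t ∨ c w = a) := by
    intro w hw
    by_cases hwx : w = x1
    · subst hwx; exact Or.inl hx1
    · obtain ⟨p⟩ := hw.symm
      obtain ⟨y, h, q, rfl⟩ := Walk.exists_eq_cons_of_ne hwx p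
      exact h.2.2.2.1
  refine ⟨c', ?_, ?_, ?_⟩
  · intro u v hu hv hadj heq
    by_cases hru : H.Reachable x1 u <;> by_cases hrv : H.Reachable x1 v
    · simp only [hc', if_pos hru, if_pos hrv] at heq
      exact hproper hu hv hadj (fin3_swap_inj t a (c u) (c v) heq)
    · have hcu := hqual u hru
      have hcv : ¬(c v = t ∨ c v = a) := fun hcv =>
        hrv (hru.trans (SimpleGraph.Adj.reachable ⟨hadj, hu, hv, hcu, hcv⟩))
      push_neg at hcv
      simp only [hc', if_pos hru, if_neg hrv] at heq
      rcases hcu with h1 | h1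
      · rw [h1] at heq; simp only [hsw, if_pos rfl] at heq; exact hcv.2 heq.symm
      · rw [h1] at heq
        simp only [hsw, if_neg (Ne.symm hta), if_pos rfl] at heq
        exact hcv.1 heq.symm
    · have hcv := hqual v hrv
      have hcu : ¬(c u = t ∨ c u = a) := fun hcu =>
        hru (hrv.trans (SimpleGraph.Adj.reachable ⟨hadj.symm, hv, hu, hcv, hcu⟩))
      push_neg at hcu
      simp only [hc', if_neg hru, if_pos hrv] at heq
      rcases hcv with h1 | h1
      · rw [h1] at heq; simp only [hsw, if_pos rfl] at heq; exact hcu.2 heq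
      · rw [h1] at heq
        simp only [hsw, if_neg (Ne.symm hta), if_pos rfl] at heq
        exact hcu.1 heq
    · simp only [hc', if_neg hru, if_neg hrv] at heq
      exact hproper hu hv hadj heq
  · simp [hc', Reachable.refl x1, hx1, hsw]
  · intro w hw; simp only [hc', if_neg hw]


lemma kempe_improve (G : SimpleGraph V) (S : Set V)
    (hdeg : ∀ v, (G.neighborSet v).ncard ≤ 3)
    (htri : ∀ v : V, ∃ a b : V, G.Adj v a ∧ G.Adj v b ∧ G.Adj a b)
    {x1 x2 x3 : V} (hx1S : x1 ∈ S) (hx2S : x2 ∈ S) (hx3S : x3 ∈ S)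
    (h12 : x1 ≠ x2) (h13 : x1 ≠ x3) (h23 : x2 ≠ x3)
    (hF : ∀ x, x = x1 ∨ x = x2 ∨ x = x3 → ∃ α β : V, α ∈ S ∧ β ∈ S ∧ G.Adj x α ∧ G.Adj x β ∧
        G.Adj α β ∧ (∀ w ∈ S, G.Adj x w → w = α ∨ w = β))
    (c : V → Fin 3) (hproper : ∀ ⦃u v⦄, u ∈ S → v ∈ S → G.Adj u v → c u ≠ c v) :
    ∃ c' : V → Fin 3, (∀ ⦃u v⦄, u ∈ S → v ∈ S → G.Adj u v → c' u ≠ c' v) ∧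
      ¬(c' x1 = c' x2 ∧ c' x2 = c' x3) := by
  classical
  by_cases hmono : c x1 = c x2 ∧ c x2 = c x3
  case neg => exact ⟨c, hproper, hmono⟩
  obtain ⟨a, ha⟩ := fin3_other (c x1)
  set t := c x1 with ht
  have hta : t ≠ a := Ne.symm ha
  set H := kempeGraph G S c t a with hH
  have hother : ∀ {v w : V}, H.Adj v w → c w ≠ c v := by
    rintro v w ⟨h1, h2, h3, _, _⟩
    exact fun he => hproper h2 h3 h1 he.symm
  have hmax : ∀ v, (H.neighborSet v).ncard ≤ 2 := by
    intro v
    by_cases hq : v ∈ S ∧ (c v = t ∨ c v = a)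
    · have hsub : H.neighborSet v ⊆ G.neighborSet v := fun w h => h.1
      have hgam : ∃ γ, γ ∈ G.neighborSet v ∧ γ ∉ H.neighborSet v := by
        by_cases hex : ∃ w, G.Adj v w ∧ w ∉ S
        · obtain ⟨w, hw1, hw2⟩ := hex
          exact ⟨w, hw1, fun h => hw2 h.2.2.1⟩
        · push_neg at hex
          obtain ⟨α, β, hα, hβ, hαβ⟩ := htri v
          have hcαβ : c α ≠ c β := hproper (hex α hα) (hex β hβ) hαβ
          set o : Fin 3 := if c v = t then a else t with ho
          have hcol : ∀ w, w ∈ H.neighborSet v → c w = o := by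
            intro w h
            have h1 := hother h
            rcases hq.2 with h2 | h2
            · rw [ho, if_pos h2]
              rcases h.2.2.2.2 with h3 | h3
              · exact absurd (h3.trans h2.symm) h1
              · exact h3
            · rw [ho, if_neg (by rw [h2]; exact Ne.symm hta)]
              rcases h.2.2.2.2 with h3 | h3
              · exact h3
              · exact absurd (h3.trans h2.symm) h1
          by_cases hco : c α = o
          · exact ⟨β, hβ, fun h => hcαβ (hco.trans (hcol β h).symm)⟩
          · exact ⟨α, hα, fun h => hco (hcol α h)⟩
      obtain ⟨γ, hγ1, hγ2⟩ := hgam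
      have hss : H.neighborSet v ⊂ G.neighborSet v :=
        (Set.ssubset_iff_of_subset hsub).mpr ⟨γ, hγ1, hγ2⟩
      have h4 := Set.ncard_lt_ncard hss (Set.toFinite _)
      have h5 := hdeg v
      omega
    · have hemp : H.neighborSet v = ∅ := by
        ext w
        simp only [mem_neighborSet, Set.mem_empty_iff_false, iff_false]
        intro h
        exact hq ⟨h.2.1, h.2.2.2.1⟩
      rw [hemp]
      simp
  have hdeg1 : ∀ x, x = x1 ∨ x = x2 ∨ x = x3 → (H.neighborSet x).ncard ≤ 1 := by
    intro x hx
    obtain ⟨α, β, hαS, hβS, hxα, hxβ, hαβ, huniq⟩ := hF x hx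
    have hcx : c x = t := by
      rcases hx with rfl | rfl | rfl
      · rfl
      · exact hmono.1.symm
      · exact (hmono.1.trans hmono.2).symm
    have hcαβ : c α ≠ c β := hproper hαS hβS hαβ
    have hcol : ∀ w, w ∈ H.neighborSet x → c w = a := by
      intro w h
      have h1 := hother h
      rcases h.2.2.2.2 with h3 | h3
      · exact absurd (h3.trans hcx.symm) h1
      · exact h3
    have hmem : ∀ w, w ∈ H.neighborSet x → w = α ∨ w = β :=
      fun w h => huniq w h.2.2.1 h.1
    by_cases hcα : c α = a
    · have hsub : H.neighborSet x ⊆ {α} := by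
        intro w h
        rcases hmem w h with rfl | rfl
        · rfl
        · exact absurd (hcα.trans ((hcol _ h).symm)) hcαβ
      have := Set.ncard_le_ncard hsub (Set.toFinite _)
      simpa [Set.ncard_singleton] using this
    · have hsub : H.neighborSet x ⊆ {β} := by
        intro w h
        rcases hmem w h with rfl | rfl
        · exact absurd (hcol _ h) hcα
        · rfl
      have := Set.ncard_le_ncard hsub (Set.toFinite _)
      simpa [Set.ncard_singleton] using this
  by_cases hr2 : H.Reachable x1 x2
  · by_cases hr3 : H.Reachable x1 x3
    · exact absurd hr3 (fun hr3 => kempe_three H hmax h12 h13 h23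
        (hdeg1 x1 (Or.inl rfl)) (hdeg1 x2 (Or.inr (Or.inl rfl)))
        (hdeg1 x3 (Or.inr (Or.inr rfl))) hr2 hr3)
    · obtain ⟨c', hp', hc'x1, hfix⟩ := kempe_swap G S c hproper t a hta x1 hx1S rfl
      refine ⟨c', hp', ?_⟩
      rintro ⟨e1, e2⟩
      have h3 : c' x3 = c x3 := hfix x3 hr3
      have : a = t := by
        rw [← hc'x1, e1, e2, h3, ← hmono.2, ← hmono.1]
      exact hta this.symm
  · obtain ⟨c', hp', hc'x1, hfix⟩ := kempe_swap G S c hproper t a hta x1 hx1S rfl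
    refine ⟨c', hp', ?_⟩
    rintro ⟨e1, e2⟩
    have h2 : c' x2 = c x2 := hfix x2 hr2
    have : a = t := by rw [← hc'x1, e1, h2, ← hmono.1]
    exact hta this.symm

lemma is_K4 (G : SimpleGraph V) (hconn : G.Connected)
    (hdeg : ∀ v : V, (G.neighborSet v).ncard ≤ 3)
    {r p q s : V}
    (hrp : G.Adj r p) (hrq : G.Adj r q) (hrs : G.Adj r s)
    (hpq : G.Adj p q) (hps : G.Adj p s) (hqs : G.Adj q s) :
    Nonempty (G ≃g completeGraph (Fin 4)) := by
  classical
  have hner : ∀ {x y : V}, G.Adj x y → x ≠ y := fun h => G.ne_of_adj h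
  have hrp' := hner hrp; have hrq' := hner hrq; have hrs' := hner hrs
  have hpq' := hner hpq; have hps' := hner hps; have hqs' := hner hqs
  -- closure
  have hclosed : ∀ u y : V, (u = r ∨ u = p ∨ u = q ∨ u = s) → G.Adj u y →
      (y = r ∨ y = p ∨ y = q ∨ y = s) := by
    intro u y hu hadj
    by_contra hy
    push_neg at hy
    obtain ⟨hy1, hy2, hy3, hy4⟩ := hy
    rcases hu with rfl | rfl | rfl | rfl
    · have := ncard_quad_le (s := G.neighborSet u) hpq' hps' (Ne.symm hy2) hqs' (Ne.symm hy3) (Ne.symm hy4)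
        hrp hrq hrs hadj (Set.toFinite (G.neighborSet u))
      have := hdeg u; omega
    · have := ncard_quad_le (s := G.neighborSet u) hrq' hrs' (Ne.symm hy1) hqs' (Ne.symm hy3) (Ne.symm hy4)
        hrp.symm hpq hps hadj (Set.toFinite (G.neighborSet u))
      have := hdeg u; omega
    · have := ncard_quad_le (s := G.neighborSet u) hrp' hrs' (Ne.symm hy1) hps' (Ne.symm hy2) (Ne.symm hy4)
        hrq.symm hpq.symm hqs hadj (Set.toFinite (G.neighborSet u))
      have := hdeg u; omega
    · have := ncard_quad_le (s := G.neighborSet u) hrp' hrq' (Ne.symm hy1) hpq' (Ne.symm hy2) (Ne.symm hy3)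
        hrs.symm hps.symm hqs.symm hadj (Set.toFinite (G.neighborSet u))
      have := hdeg u; omega
  have hall : ∀ v : V, v = r ∨ v = p ∨ v = q ∨ v = s := by
    intro v
    obtain ⟨w⟩ := hconn r v
    have key : ∀ (u x : V) (_ : G.Walk u x), (u = r ∨ u = p ∨ u = q ∨ u = s) →
        (x = r ∨ x = p ∨ x = q ∨ x = s) := by
      intro u x w
      induction w with
      | nil => exact fun h => h
      | cons h q ih => intro hu; exact ih (hclosed _ _ hu h)
    exact key r v w (Or.inl rfl)
  set f : V → Fin 4 := fun v => if v = r then 0 else if v = p then 1 else if v = q then 2 else 3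
    with hf
  have hfr : f r = 0 := by simp [hf]
  have hfp : f p = 1 := by simp [hf, Ne.symm hrp']
  have hfq : f q = 2 := by simp [hf, Ne.symm hrq', Ne.symm hpq']
  have hfs : f s = 3 := by simp [hf, Ne.symm hrs', Ne.symm hps', Ne.symm hqs']
  have hinj : Function.Injective f := by
    intro u v huv
    rcases hall u with rfl | rfl | rfl | rfl <;> rcases hall v with rfl | rfl | rfl | rfl <;>
      simp only [hfr, hfp, hfq, hfs] at huv <;>
      first | rfl | exact absurd huv (by decide)
  have hsurj : Function.Surjective f := by
    intro i
    fin_cases i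
    exacts [⟨r, hfr⟩, ⟨p, hfp⟩, ⟨q, hfq⟩, ⟨s, hfs⟩]
  refine ⟨⟨Equiv.ofBijective f ⟨hinj, hsurj⟩, ?_⟩⟩
  intro u v
  show f u ≠ f v ↔ G.Adj u v
  constructor
  · intro hne
    have huv : u ≠ v := fun h => hne (h ▸ rfl)
    rcases hall u with rfl | rfl | rfl | rfl <;> rcases hall v with rfl | rfl | rfl | rfl <;>
      first
        | exact absurd rfl huv
        | assumption
        | exact hrp.symm | exact hrq.symm | exact hrs.symm
        | exact hpq.symm | exact hps.symm | exact hqs.symm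
  · intro hadj heq
    exact hner hadj (hinj heq)

lemma diamond_extend (G : SimpleGraph V) (hconn : G.Connected)
    (hdeg : ∀ v : V, (G.neighborSet v).ncard ≤ 3)
    {v0 b0 a0 c0 : V}
    (hva : G.Adj v0 a0) (hvb : G.Adj v0 b0) (hvc : G.Adj v0 c0)
    (hab : G.Adj a0 b0) (hbc : G.Adj b0 c0)
    (hac : ¬ G.Adj a0 c0) (hacne : a0 ≠ c0) :
    ∃ c : V → Fin 3, ∀ ⦃u v⦄, G.Adj u v → c u ≠ c v := by
  classical
  set C : Set V := {v0, b0, a0, c0} with hC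
  set S : Set V := Cᶜ with hS
  have hva' : v0 ≠ a0 := G.ne_of_adj hva
  have hvb' : v0 ≠ b0 := G.ne_of_adj hvb
  have hvc' : v0 ≠ c0 := G.ne_of_adj hvc
  have hab' : a0 ≠ b0 := G.ne_of_adj hab
  have hbc' : b0 ≠ c0 := G.ne_of_adj hbc
  have hNv : G.neighborSet v0 = {a0, b0, c0} :=
    set_eq_triple hab' hacne hbc' hva hvb hvc (Set.toFinite _) (hdeg v0)
  have hNb : G.neighborSet b0 = {a0, v0, c0} :=
    set_eq_triple (Ne.symm hva') hacne hvc' hab.symm hvb.symm hbc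
      (Set.toFinite _) (hdeg b0)
  have hv0C : v0 ∈ C := by simp [hC]
  have hb0C : b0 ∈ C := by simp [hC]
  have ha0C : a0 ∈ C := by simp [hC]
  have hc0C : c0 ∈ C := by simp [hC]
  obtain ⟨c₀, hc₀⟩ := exists_proper_outside G hconn hdeg S v0 (by simp [hS, hv0C])
  have hSnotC : ∀ {w : V}, w ∈ S → w ∉ C := fun hw => hw
  have hadjv0 : ∀ w, G.Adj v0 w → w ∈ C := by
    intro w h
    have hmem : w ∈ G.neighborSet v0 := h
    rw [hNv] at hmem
    rcases hmem with rfl | rfl | rfl <;> assumption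
  have hadjb0 : ∀ w, G.Adj b0 w → w ∈ C := by
    intro w h
    have hmem : w ∈ G.neighborSet b0 := h
    rw [hNb] at hmem
    rcases hmem with rfl | rfl | rfl <;> assumption
  have huniq_a : ∀ y1 y2, y1 ∈ S → y2 ∈ S → G.Adj a0 y1 → G.Adj a0 y2 → y1 = y2 := by
    intro y1 y2 hy1 hy2 ha1 ha2
    by_contra hne12
    have hvy1 : v0 ≠ y1 := fun h => hSnotC hy1 (h ▸ hv0C)
    have hvy2 : v0 ≠ y2 := fun h => hSnotC hy2 (h ▸ hv0C)
    have hby1 : b0 ≠ y1 := fun h => hSnotC hy1 (h ▸ hb0C)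
    have hby2 : b0 ≠ y2 := fun h => hSnotC hy2 (h ▸ hb0C)
    have h4 := ncard_quad_le (s := G.neighborSet a0) hvb' hvy1 hvy2 hby1 hby2 hne12
      hva.symm hab ha1 ha2 (Set.toFinite _)
    have := hdeg a0; omega
  have huniq_c : ∀ y1 y2, y1 ∈ S → y2 ∈ S → G.Adj c0 y1 → G.Adj c0 y2 → y1 = y2 := by
    intro y1 y2 hy1 hy2 ha1 ha2
    by_contra hne12
    have hvy1 : v0 ≠ y1 := fun h => hSnotC hy1 (h ▸ hv0C)
    have hvy2 : v0 ≠ y2 := fun h => hSnotC hy2 (h ▸ hv0C)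
    have hby1 : b0 ≠ y1 := fun h => hSnotC hy1 (h ▸ hb0C)
    have hby2 : b0 ≠ y2 := fun h => hSnotC hy2 (h ▸ hb0C)
    have h4 := ncard_quad_le (s := G.neighborSet c0) hvb' hvy1 hvy2 hby1 hby2 hne12
      hvc.symm hbc.symm ha1 ha2 (Set.toFinite _)
    have := hdeg c0; omega
  set τa : Fin 3 := if h : ∃ y, y ∈ S ∧ G.Adj a0 y then c₀ h.choose else 0 with hτa
  set τc : Fin 3 := if h : ∃ y, y ∈ S ∧ G.Adj c0 y then c₀ h.choose else 0 with hτc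
  have hτa_spec : ∀ y, y ∈ S → G.Adj a0 y → c₀ y = τa := by
    intro y hy hadj
    have hex : ∃ y, y ∈ S ∧ G.Adj a0 y := ⟨y, hy, hadj⟩
    rw [hτa, dif_pos hex]
    obtain ⟨h1, h2⟩ := hex.choose_spec
    rw [huniq_a y hex.choose hy h1 hadj h2]
  have hτc_spec : ∀ y, y ∈ S → G.Adj c0 y → c₀ y = τc := by
    intro y hy hadj
    have hex : ∃ y, y ∈ S ∧ G.Adj c0 y := ⟨y, hy, hadj⟩
    rw [hτc, dif_pos hex]
    obtain ⟨h1, h2⟩ := hex.choose_spec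
    rw [huniq_c y hex.choose hy h1 hadj h2]
  obtain ⟨x, y, z, hxy, hxz, hyz, hxτa, hxτc⟩ := fin3_diamond τa τc
  set c : V → Fin 3 := fun w =>
    if w = v0 then y else if w = b0 then z else if w = a0 then x else if w = c0 then x else c₀ w
    with hc
  have hcv0 : c v0 = y := by simp [hc]
  have hcb0 : c b0 = z := by simp [hc, Ne.symm hvb']
  have hca0 : c a0 = x := by simp [hc, Ne.symm hva', hab']
  have hcc0 : c c0 = x := by simp [hc, Ne.symm hvc', Ne.symm hbc', Ne.symm hacne]
  have hcS : ∀ w, w ∈ S → c w = c₀ w := by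
    intro w hw
    have h1 : w ≠ v0 := fun h => hSnotC hw (h ▸ hv0C)
    have h2 : w ≠ b0 := fun h => hSnotC hw (h ▸ hb0C)
    have h3 : w ≠ a0 := fun h => hSnotC hw (h ▸ ha0C)
    have h4 : w ≠ c0 := fun h => hSnotC hw (h ▸ hc0C)
    simp [hc, h1, h2, h3, h4]
  have hclass : ∀ w : V, w = v0 ∨ w = b0 ∨ w = a0 ∨ w = c0 ∨ w ∈ S := by
    intro w
    by_cases h : w ∈ C
    · rcases h with h | h | h | h
      · exact Or.inl h
      · exact Or.inr (Or.inl h)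
      · exact Or.inr (Or.inr (Or.inl h))
      · exact Or.inr (Or.inr (Or.inr (Or.inl h)))
    · exact Or.inr (Or.inr (Or.inr (Or.inr h)))
  refine ⟨c, ?_⟩
  intro u w hadj heq
  rcases hclass u with rfl | rfl | rfl | rfl | hu <;>
    rcases hclass w with rfl | rfl | rfl | rfl | hw
  · exact G.loopless.irrefl _ hadj
  · rw [hcv0, hcb0] at heq; exact hyz heq
  · rw [hcv0, hca0] at heq; exact hxy heq.symm
  · rw [hcv0, hcc0] at heq; exact hxy heq.symm
  · exact hSnotC hw (hadjv0 w hadj)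
  · rw [hcb0, hcv0] at heq; exact hyz heq.symm
  · exact G.loopless.irrefl _ hadj
  · rw [hcb0, hca0] at heq; exact hxz heq.symm
  · rw [hcb0, hcc0] at heq; exact hxz heq.symm
  · exact hSnotC hw (hadjb0 w hadj)
  · rw [hca0, hcv0] at heq; exact hxy heq
  · rw [hca0, hcb0] at heq; exact hxz heq
  · exact G.loopless.irrefl _ hadj
  · exact hac hadj
  · rw [hca0, hcS w hw] at heq; exact hxτa (heq.trans (hτa_spec w hw hadj))
  · rw [hcc0, hcv0] at heq; exact hxy heq
  · rw [hcc0, hcb0] at heq; exact hxz heq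
  · exact hac hadj.symm
  · exact G.loopless.irrefl _ hadj
  · rw [hcc0, hcS w hw] at heq; exact hxτc (heq.trans (hτc_spec w hw hadj))
  · exact hSnotC hu (hadjv0 u hadj.symm)
  · exact hSnotC hu (hadjb0 u hadj.symm)
  · rw [hcS u hu, hca0] at heq
    exact hxτa (heq.symm.trans (hτa_spec u hu hadj.symm))
  · rw [hcS u hu, hcc0] at heq
    exact hxτc (heq.symm.trans (hτc_spec u hu hadj.symm))
  · rw [hcS u hu, hcS w hw] at heq
    exact hc₀ hu hw hadj heq

lemma triangle_assemble (G : SimpleGraph V)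
    {r p q : V} (hrp : G.Adj r p) (hrq : G.Adj r q) (hpq : G.Adj p q)
    (c₁ : V → Fin 3)
    (hc₁ : ∀ ⦃u v⦄, u ∈ (({r, p, q} : Set V)ᶜ) → v ∈ (({r, p, q} : Set V)ᶜ) →
      G.Adj u v → c₁ u ≠ c₁ v)
    (τr τp τq : Fin 3) (hneq : ¬(τr = τp ∧ τp = τq))
    (hτr : ∀ y, y ∈ (({r, p, q} : Set V)ᶜ) → G.Adj r y → c₁ y = τr)
    (hτp : ∀ y, y ∈ (({r, p, q} : Set V)ᶜ) → G.Adj p y → c₁ y = τp)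
    (hτq : ∀ y, y ∈ (({r, p, q} : Set V)ᶜ) → G.Adj q y → c₁ y = τq) :
    ∃ c : V → Fin 3, ∀ ⦃u v⦄, G.Adj u v → c u ≠ c v := by
  classical
  set C : Set V := {r, p, q} with hC
  have hrp' : r ≠ p := G.ne_of_adj hrp
  have hrq' : r ≠ q := G.ne_of_adj hrq
  have hpq' : p ≠ q := G.ne_of_adj hpq
  obtain ⟨d1, d2, d3, h12, h13, h23, hd1, hd2, hd3⟩ := fin3_rainbow τr τp τq hneq
  set c : V → Fin 3 := fun w =>
    if w = r then d1 else if w = p then d2 else if w = q then d3 else c₁ w with hc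
  have hcr : c r = d1 := by simp [hc]
  have hcp : c p = d2 := by simp [hc, Ne.symm hrp']
  have hcq : c q = d3 := by simp [hc, Ne.symm hrq', Ne.symm hpq']
  have hcS : ∀ w, w ∈ Cᶜ → c w = c₁ w := by
    intro w hw
    simp only [hC, Set.mem_compl_iff, Set.mem_insert_iff, Set.mem_singleton_iff] at hw
    push_neg at hw
    simp [hc, hw.1, hw.2.1, hw.2.2]
  have hclass : ∀ w : V, w = r ∨ w = p ∨ w = q ∨ w ∈ Cᶜ := by
    intro w
    by_cases h : w ∈ C
    · rcases h with h | h | h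
      · exact Or.inl h
      · exact Or.inr (Or.inl h)
      · exact Or.inr (Or.inr (Or.inl h))
    · exact Or.inr (Or.inr (Or.inr h))
  refine ⟨c, ?_⟩
  intro u w hadj heq
  rcases hclass u with rfl | rfl | rfl | hu <;> rcases hclass w with rfl | rfl | rfl | hw
  · exact G.loopless.irrefl _ hadj
  · rw [hcr, hcp] at heq; exact h12 heq
  · rw [hcr, hcq] at heq; exact h13 heq
  · rw [hcr, hcS w hw] at heq; exact hd1 (heq.trans (hτr w hw hadj))
  · rw [hcp, hcr] at heq; exact h12 heq.symm
  · exact G.loopless.irrefl _ hadj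
  · rw [hcp, hcq] at heq; exact h23 heq
  · rw [hcp, hcS w hw] at heq; exact hd2 (heq.trans (hτp w hw hadj))
  · rw [hcq, hcr] at heq; exact h13 heq.symm
  · rw [hcq, hcp] at heq; exact h23 heq.symm
  · exact G.loopless.irrefl _ hadj
  · rw [hcq, hcS w hw] at heq; exact hd3 (heq.trans (hτq w hw hadj))
  · rw [hcS u hu, hcr] at heq; exact hd1 (heq.symm.trans (hτr u hu hadj.symm))
  · rw [hcS u hu, hcp] at heq; exact hd2 (heq.symm.trans (hτp u hu hadj.symm))
  · rw [hcS u hu, hcq] at heq; exact hd3 (heq.symm.trans (hτq u hu hadj.symm))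
  · rw [hcS u hu, hcS w hw] at heq; exact hc₁ hu hw hadj heq

lemma triangle_extend (G : SimpleGraph V) (hconn : G.Connected)
    (hdeg : ∀ v : V, (G.neighborSet v).ncard ≤ 3)
    (htri : ∀ v : V, ∃ a b : V, G.Adj v a ∧ G.Adj v b ∧ G.Adj a b)
    {r p q : V} (hrp : G.Adj r p) (hrq : G.Adj r q) (hpq : G.Adj p q)
    (hok : (∀ y, y ∉ ({r, p, q} : Set V) → ¬ G.Adj r y) ∨
      (∀ y, y ∉ ({r, p, q} : Set V) → ∀ w1 w2, w1 ∈ ({r, p, q} : Set V) →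
        w2 ∈ ({r, p, q} : Set V) → G.Adj y w1 → G.Adj y w2 → w1 = w2)) :
    ∃ c : V → Fin 3, ∀ ⦃u v⦄, G.Adj u v → c u ≠ c v := by
  classical
  set C : Set V := {r, p, q} with hC
  have hrp' : r ≠ p := G.ne_of_adj hrp
  have hrq' : r ≠ q := G.ne_of_adj hrq
  have hpq' : p ≠ q := G.ne_of_adj hpq
  have hrC : r ∈ C := by simp [hC]
  have hpC : p ∈ C := by simp [hC]
  have hqC : q ∈ C := by simp [hC]
  have hSnotC : ∀ {w : V}, w ∈ Cᶜ → w ∉ C := fun hw => hw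
  have hmates : ∀ u, u ∈ C → ∃ m1 m2, G.Adj u m1 ∧ G.Adj u m2 ∧ m1 ≠ m2 ∧ m1 ∈ C ∧ m2 ∈ C := by
    intro u hu
    rcases hu with rfl | rfl | rfl
    · exact ⟨p, q, hrp, hrq, hpq', hpC, hqC⟩
    · exact ⟨r, q, hrp.symm, hpq, hrq', hrC, hqC⟩
    · exact ⟨r, p, hrq.symm, hpq.symm, hrp', hrC, hpC⟩
  have huniq : ∀ u, u ∈ C → ∀ y1 y2, y1 ∈ Cᶜ → y2 ∈ Cᶜ →
      G.Adj u y1 → G.Adj u y2 → y1 = y2 := by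
    intro u hu y1 y2 hy1 hy2 ha1 ha2
    by_contra hne12
    obtain ⟨m1, m2, hum1, hum2, hm12, hm1C, hm2C⟩ := hmates u hu
    have h1 : m1 ≠ y1 := fun h => hSnotC hy1 (h ▸ hm1C)
    have h2 : m1 ≠ y2 := fun h => hSnotC hy2 (h ▸ hm1C)
    have h3 : m2 ≠ y1 := fun h => hSnotC hy1 (h ▸ hm2C)
    have h4 : m2 ≠ y2 := fun h => hSnotC hy2 (h ▸ hm2C)
    have h5 := ncard_quad_le (s := G.neighborSet u) hm12 h1 h2 h3 h4 hne12
      hum1 hum2 ha1 ha2 (Set.toFinite _)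
    have := hdeg u; omega
  obtain ⟨c₀, hc₀⟩ := exists_proper_outside G hconn hdeg Cᶜ r (by simp [hrC])
  -- existence predicates
  by_cases hEr : ∃ y, y ∈ Cᶜ ∧ G.Adj r y
  · by_cases hEp : ∃ y, y ∈ Cᶜ ∧ G.Adj p y
    · by_cases hEq : ∃ y, y ∈ Cᶜ ∧ G.Adj q y
      · -- all three have outside neighbors: use Kempe machinery; requires the guard
        rcases hok with hnone | hguard
        · obtain ⟨y, hy, hadj⟩ := hEr
          exact absurd hadj (hnone y (hSnotC hy))
        · obtain ⟨xr, hxrS, hrxr⟩ := hEr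
          obtain ⟨xp, hxpS, hpxp⟩ := hEp
          obtain ⟨xq, hxqS, hqxq⟩ := hEq
          have hd : ∀ x u1 u2, x ∈ Cᶜ → u1 ∈ C → u2 ∈ C → G.Adj u1 x → G.Adj u2 x →
              u1 = u2 := fun x u1 u2 hx hu1 hu2 h1 h2 =>
            hguard x (hSnotC hx) u1 u2 hu1 hu2 h1.symm h2.symm
          have hne_rp : xr ≠ xp := fun h =>
            hrp' (hd xr r p hxrS hrC hpC hrxr (h ▸ hpxp))
          have hne_rq : xr ≠ xq := fun h =>
            hrq' (hd xr r q hxrS hrC hqC hrxr (h ▸ hqxq))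
          have hne_pq : xp ≠ xq := fun h =>
            hpq' (hd xp p q hxpS hpC hqC hpxp (h ▸ hqxq))
          -- structure fact
          have hFgen : ∀ u x, u ∈ C → x ∈ Cᶜ → G.Adj u x →
              ∃ α β, α ∈ Cᶜ ∧ β ∈ Cᶜ ∧ G.Adj x α ∧ G.Adj x β ∧ G.Adj α β ∧
                ∀ w, w ∈ Cᶜ → G.Adj x w → w = α ∨ w = β := by
            intro u x hu hx hadj
            obtain ⟨α, β, hxα, hxβ, hαβ⟩ := htri x
            obtain ⟨m1, m2, hum1, hum2, hm12, hm1C, hm2C⟩ := hmates u hu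
            have hCadj : ∀ w, w ∈ C → G.Adj x w → w = u := fun w hw hxw =>
              hguard x (hSnotC hx) w u hw hu hxw hadj.symm
            have hnotC : ∀ γ δ, G.Adj x γ → G.Adj x δ → G.Adj γ δ → γ ∈ C → False := by
              intro γ δ h1 h2 h3 hγC
              have hγu : γ = u := hCadj γ hγC h1
              subst hγu
              by_cases hδC : δ ∈ C
              · exact G.ne_of_adj h3 (hCadj δ hδC h2).symm
              · have hδx : δ ≠ x := G.ne_of_adj h2.symm
                have e1 : m1 ≠ x := fun h => hSnotC hx (h ▸ hm1C)
                have e2 : m1 ≠ δ := fun h => hδC (h ▸ hm1C)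
                have e3 : m2 ≠ x := fun h => hSnotC hx (h ▸ hm2C)
                have e4 : m2 ≠ δ := fun h => hδC (h ▸ hm2C)
                have e5 : x ≠ δ := hδx.symm
                have h5 := ncard_quad_le (s := G.neighborSet γ) hm12 e1 e2 e3 e4 e5
                  hum1 hum2 hadj h3 (Set.toFinite _)
                have := hdeg γ; omega
            have hαC : α ∈ Cᶜ := fun h => hnotC α β hxα hxβ hαβ h
            have hβC : β ∈ Cᶜ := fun h => hnotC β α hxβ hxα hαβ.symm h
            refine ⟨α, β, hαC, hβC, hxα, hxβ, hαβ, ?_⟩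
            intro w hw hxw
            by_contra hne
            push_neg at hne
            have e1 : u ≠ α := fun h => hSnotC hαC (h ▸ hu)
            have e2 : u ≠ β := fun h => hSnotC hβC (h ▸ hu)
            have e3 : u ≠ w := fun h => hSnotC hw (h ▸ hu)
            have e4 : α ≠ β := G.ne_of_adj hαβ
            have e5 : α ≠ w := fun h => hne.1 h.symm
            have e6 : β ≠ w := fun h => hne.2 h.symm
            have h5 := ncard_quad_le (s := G.neighborSet x) e1 e2 e3 e4 e5 e6
              hadj.symm hxα hxβ hxw (Set.toFinite _)
            have := hdeg x; omega
          have hF : ∀ x, x = xr ∨ x = xp ∨ x = xq →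
              ∃ α β : V, α ∈ Cᶜ ∧ β ∈ Cᶜ ∧ G.Adj x α ∧ G.Adj x β ∧
                G.Adj α β ∧ (∀ w ∈ Cᶜ, G.Adj x w → w = α ∨ w = β) := by
            intro x hx
            rcases hx with rfl | rfl | rfl
            · exact hFgen r x hrC hxrS hrxr
            · exact hFgen p x hpC hxpS hpxp
            · exact hFgen q x hqC hxqS hqxq
          obtain ⟨c₁, hc₁, hne3⟩ := kempe_improve G Cᶜ hdeg htri hxrS hxpS hxqS
            hne_rp hne_rq hne_pq hF c₀ hc₀
          refine triangle_assemble G hrp hrq hpq c₁ hc₁ (c₁ xr) (c₁ xp) (c₁ xq) hne3 ?_ ?_ ?_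
          · intro y hy hadj
            rw [huniq r hrC y xr hy hxrS hadj hrxr]
          · intro y hy hadj
            rw [huniq p hpC y xp hy hxpS hadj hpxp]
          · intro y hy hadj
            rw [huniq q hqC y xq hy hxqS hadj hqxq]
      · -- q has no outside neighbor
        obtain ⟨xr, hxrS, hrxr⟩ := hEr
        obtain ⟨xp, hxpS, hpxp⟩ := hEp
        obtain ⟨τq, hτq⟩ := fin3_other (c₀ xp)
        refine triangle_assemble G hrp hrq hpq c₀ hc₀ (c₀ xr) (c₀ xp) τq
          (fun h => hτq h.2.symm) ?_ ?_ ?_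
        · intro y hy hadj
          rw [huniq r hrC y xr hy hxrS hadj hrxr]
        · intro y hy hadj
          rw [huniq p hpC y xp hy hxpS hadj hpxp]
        · intro y hy hadj
          exact absurd ⟨y, hy, hadj⟩ hEq
    · -- p has no outside neighbor
      obtain ⟨xr, hxrS, hrxr⟩ := hEr
      obtain ⟨τp, hτp⟩ := fin3_other (c₀ xr)
      -- τq arbitrary with spec
      set τq : Fin 3 := if h : ∃ y, y ∈ Cᶜ ∧ G.Adj q y then c₀ h.choose else 0 with hτqdef
      refine triangle_assemble G hrp hrq hpq c₀ hc₀ (c₀ xr) τp τq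
        (fun h => hτp h.1.symm) ?_ ?_ ?_
      · intro y hy hadj
        rw [huniq r hrC y xr hy hxrS hadj hrxr]
      · intro y hy hadj
        exact absurd ⟨y, hy, hadj⟩ hEp
      · intro y hy hadj
        have hex : ∃ y, y ∈ Cᶜ ∧ G.Adj q y := ⟨y, hy, hadj⟩
        rw [hτqdef, dif_pos hex]
        obtain ⟨h1, h2⟩ := hex.choose_spec
        rw [huniq q hqC y hex.choose hy h1 hadj h2]
  · -- r has no outside neighbor
    set τp : Fin 3 := if h : ∃ y, y ∈ Cᶜ ∧ G.Adj p y then c₀ h.choose else 0 with hτpdef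
    set τq : Fin 3 := if h : ∃ y, y ∈ Cᶜ ∧ G.Adj q y then c₀ h.choose else 0 with hτqdef
    obtain ⟨τr, hτr⟩ := fin3_other τp
    refine triangle_assemble G hrp hrq hpq c₀ hc₀ τr τp τq
      (fun h => hτr h.1) ?_ ?_ ?_
    · intro y hy hadj
      exact absurd ⟨y, hy, hadj⟩ hEr
    · intro y hy hadj
      have hex : ∃ y, y ∈ Cᶜ ∧ G.Adj p y := ⟨y, hy, hadj⟩
      rw [hτpdef, dif_pos hex]
      obtain ⟨h1, h2⟩ := hex.choose_spec
      rw [huniq p hpC y hex.choose hy h1 hadj h2]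
    · intro y hy hadj
      have hex : ∃ y, y ∈ Cᶜ ∧ G.Adj q y := ⟨y, hy, hadj⟩
      rw [hτqdef, dif_pos hex]
      obtain ⟨h1, h2⟩ := hex.choose_spec
      rw [huniq q hqC y hex.choose hy h1 hadj h2]

lemma exists_proper3 (G : SimpleGraph V) (hconn : G.Connected)
    (hdeg : ∀ v : V, (G.neighborSet v).ncard ≤ 3)
    (hK4 : ¬ Nonempty (G ≃g completeGraph (Fin 4)))
    (htri : ∀ v : V, ∃ a b : V, G.Adj v a ∧ G.Adj v b ∧ G.Adj a b) :
    ∃ c : V → Fin 3, ∀ ⦃u v⦄, G.Adj u v → c u ≠ c v := by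
  classical
  cases isEmpty_or_nonempty V with
  | inl h => exact ⟨fun v => isEmptyElim v, fun u v h => isEmptyElim u⟩
  | inr h =>
  obtain ⟨r⟩ := h
  obtain ⟨p, q, hrp, hrq, hpq⟩ := htri r
  have hrp' : r ≠ p := G.ne_of_adj hrp
  have hrq' : r ≠ q := G.ne_of_adj hrq
  have hpq' : p ≠ q := G.ne_of_adj hpq
  by_cases hs : ∃ s, G.Adj r s ∧ s ≠ p ∧ s ≠ q
  · obtain ⟨s, hrs, hsp, hsq⟩ := hs
    have hNr : G.neighborSet r = {p, q, s} :=
      set_eq_triple hpq' (Ne.symm hsp) (Ne.symm hsq) hrp hrq hrs (Set.toFinite _) (hdeg r)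
    by_cases hsp2 : G.Adj s p
    · by_cases hsq2 : G.Adj s q
      · exact absurd (is_K4 G hconn hdeg hrp hrq hrs hpq hsp2.symm hsq2.symm) hK4
      · exact diamond_extend G hconn hdeg hrq hrp hrs hpq.symm hsp2.symm
          (fun h => hsq2 h.symm) (Ne.symm hsq)
    · by_cases hsq2 : G.Adj s q
      · exact diamond_extend G hconn hdeg hrp hrq hrs hpq hsq2.symm
          (fun h => hsp2 h.symm) (Ne.symm hsp)
      · by_cases hw : ∃ w, w ≠ r ∧ G.Adj w p ∧ G.Adj w q
        · obtain ⟨w, hwr, hwp, hwq⟩ := hw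
          have hnrw : ¬ G.Adj r w := by
            intro hcontra
            have hmem : w ∈ G.neighborSet r := hcontra
            rw [hNr] at hmem
            rcases hmem with rfl | rfl | rfl
            · exact G.loopless.irrefl _ hwp
            · exact G.loopless.irrefl _ hwq
            · exact hsp2 hwp
          exact diamond_extend G hconn hdeg hrp.symm hpq hwp.symm hrq hwq.symm hnrw
            (Ne.symm hwr)
        · apply triangle_extend G hconn hdeg htri hrp hrq hpq
          right
          intro y hy w1 w2 hw1 hw2 hyw1 hyw2
          simp only [Set.mem_insert_iff, Set.mem_singleton_iff] at hy hw1 hw2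
          push_neg at hy
          obtain ⟨hyr, hyp, hyq⟩ := hy
          have hyS : G.Adj y r → y = s := by
            intro hadj
            have hmem : y ∈ G.neighborSet r := hadj.symm
            rw [hNr] at hmem
            rcases hmem with rfl | rfl | rfl
            · exact absurd rfl hyp
            · exact absurd rfl hyq
            · rfl
          rcases hw1 with rfl | rfl | rfl <;> rcases hw2 with rfl | rfl | rfl
          · rfl
          · have hys := hyS hyw1; subst hys; exact absurd hyw2 hsp2
          · have hys := hyS hyw1; subst hys; exact absurd hyw2 hsq2
          · have hys := hyS hyw2; subst hys; exact absurd hyw1 hsp2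
          · rfl
          · exact absurd ⟨y, hyr, hyw1, hyw2⟩ hw
          · have hys := hyS hyw2; subst hys; exact absurd hyw1 hsq2
          · exact absurd ⟨y, hyr, hyw2, hyw1⟩ hw
          · rfl
  · push_neg at hs
    apply triangle_extend G hconn hdeg htri hrp hrq hpq
    left
    intro y hy hadj
    simp only [Set.mem_insert_iff, Set.mem_singleton_iff] at hy
    push_neg at hy
    by_cases hyp : y = p
    · exact hy.2.1 hyp
    · exact hy.2.2 (hs y hadj hyp)

end Main

/-- If `G` is a connected graph with maximum degree at most 3, not isomorphic to `K_4`,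
in which every vertex is contained in a triangle, then `χ_d(G) ≤ 3`. -/
theorem dynamic_chromatic_le_three_of_triangles {V : Type*} [Fintype V]
    (G : SimpleGraph V) (hconn : G.Connected)
    (hdeg : ∀ v : V, (G.neighborSet v).ncard ≤ 3)
    (hK4 : ¬ Nonempty (G ≃g completeGraph (Fin 4)))
    (htri : ∀ v : V, ∃ a b : V, G.Adj v a ∧ G.Adj v b ∧ G.Adj a b) :
    dynamicChromaticNumber G ≤ 3 := by
  obtain ⟨c, hc⟩ := exists_proper3 G hconn hdeg hK4 htri
  have hmem : 3 ∈ {k : ℕ | ∃ c : V → Fin k, IsDynamicColoring G k c} := by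
    refine ⟨c, hc, ?_⟩
    intro v _
    obtain ⟨a, b, h1, h2, h3⟩ := htri v
    exact ⟨a, b, h1, h2, hc h3⟩
  exact Nat.sInf_le hmem
end

section
/- Let G ∈ 𝒯 be a graph whose vertex set is partitioned into n vertex-disjoint triangles. Then the independence number of G equals n, i.e., α(G) = n. -/
open SimpleGraph

/-- `idx` exhibits `G` as a graph in the class `𝒯`: the fibers of `idx` are `n`
vertex-disjoint triangles (each fiber has 3 pairwise adjacent vertices), and every
vertex has exactly one neighbor outside its own triangle (so `G` is 3-regular). -/
def TrianglePartition {V : Type*} (G : SimpleGraph V) (n : ℕ) (idx : V → Fin n) : Prop :=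
  (∀ u v : V, u ≠ v → idx u = idx v → G.Adj u v) ∧
  (∀ i : Fin n, (idx ⁻¹' {i}).ncard = 3) ∧
  (∀ v : V, {u : V | G.Adj v u ∧ idx u ≠ idx v}.ncard = 1)

/-- `s` is an independent set of `G`. -/
def IsIndepSet' {V : Type*} (G : SimpleGraph V) (s : Set V) : Prop :=
  ∀ ⦃u : V⦄, u ∈ s → ∀ ⦃v : V⦄, v ∈ s → ¬ G.Adj u v

/-- The independence number `α(G)`. -/
noncomputable def indepNumber {V : Type*} (G : SimpleGraph V) : ℕ :=
  sSup {k : ℕ | ∃ s : Set V, IsIndepSet' G s ∧ s.ncard = k}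

/-- If the vertex set of `G ∈ 𝒯` is partitioned into `n` vertex-disjoint triangles,
then `α(G) = n`. -/
theorem indepNumber_of_trianglePartition {V : Type*} [Fintype V] (G : SimpleGraph V)
    (n : ℕ) (idx : V → Fin n) (hT : TrianglePartition G n idx) :
    indepNumber G = n := by
  classical
  obtain ⟨hadj, hfib, hout⟩ := hT
  -- the mate function
  have hm : ∀ v : V, ∃ a, {u : V | G.Adj v u ∧ idx u ≠ idx v} = {a} := by
    intro v
    rw [← Set.ncard_eq_one]
    exact hout v
  choose m hmspec using hm
  have hmem : ∀ v, G.Adj v (m v) ∧ idx (m v) ≠ idx v := by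
    intro v
    have h : m v ∈ ({m v} : Set V) := rfl
    rw [← hmspec v] at h
    exact h
  have hadjm : ∀ v, G.Adj v (m v) := fun v => (hmem v).1
  have hidxm : ∀ v, idx (m v) ≠ idx v := fun v => (hmem v).2
  have huniq : ∀ v u, G.Adj v u → idx u ≠ idx v → u = m v := by
    intro v u h1 h2
    have h : u ∈ {u : V | G.Adj v u ∧ idx u ≠ idx v} := ⟨h1, h2⟩
    rw [hmspec v] at h
    exact h
  have hmm : ∀ v, m (m v) = v := by
    intro v
    exact (huniq (m v) v (hadjm v).symm (fun h => hidxm v h.symm)).symm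
  -- fibers as finsets
  set F : Fin n → Finset V := fun i => Finset.univ.filter (fun v => idx v = i) with hF
  have hFcard : ∀ i, (F i).card = 3 := by
    intro i
    have : (idx ⁻¹' {i}) = ↑(F i) := by
      ext v; simp [hF]
    have h := hfib i
    rwa [this, Set.ncard_coe_finset] at h
  -- edges function
  set e : V → Sym2 V := fun v => s(v, m v) with he
  set t : Fin n → Finset (Sym2 V) := fun i => (F i).image e with ht
  -- Hall's condition
  have hall : ∀ A : Finset (Fin n), A.card ≤ (A.biUnion t).card := by
    intro A
    set B : Finset V := A.biUnion F with hB
    have hBcard : B.card = 3 * A.card := by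
      rw [hB, Finset.card_biUnion]
      · simp [hFcard, Finset.sum_const, mul_comm]
      · intro i _ j _ hij
        simp only [Finset.disjoint_left]
        intro v hv hv'
        simp [hF] at hv hv'
        exact hij (hv ▸ hv')
    have himg : B.image e = A.biUnion t := by
      ext x
      simp only [Finset.mem_image, Finset.mem_biUnion, hB, ht]
      constructor
      · rintro ⟨v, ⟨i, hi, hvF⟩, rfl⟩
        exact ⟨i, hi, v, hvF, rfl⟩
      · rintro ⟨i, hi, hx⟩
        obtain ⟨v, hvF, rfl⟩ := hx
        exact ⟨v, ⟨i, hi, hvF⟩, rfl⟩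
    have hfibers : B.card ≤ 2 * (B.image e).card := by
      apply Finset.card_le_mul_card_image
      intro b hb
      obtain ⟨v0, _, rfl⟩ := Finset.mem_image.mp hb
      have hsub : {a ∈ B | e a = e v0} ⊆ {v0, m v0} := by
        intro v hv
        have hev : e v = e v0 := (Finset.mem_filter.mp hv).2
        rw [he] at hev
        simp only [Sym2.eq, Sym2.rel_iff', Prod.mk.injEq, Prod.swap_prod_mk] at hev
        rcases hev with ⟨h1, _⟩ | ⟨h1, _⟩ <;> simp [h1]
      calc ({a ∈ B | e a = e v0}).card ≤ ({v0, m v0} : Finset V).card :=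
            Finset.card_le_card hsub
        _ ≤ 2 := Finset.card_insert_le _ _ |>.trans (by simp)
    rw [himg] at hfibers
    omega
  obtain ⟨f, hfinj, hft⟩ := (Finset.all_card_le_biUnion_card_iff_exists_injective t).mp hall
  -- choose the endpoint of f i in triangle i
  have hg : ∀ i, ∃ v, v ∈ F i ∧ e v = f i := by
    intro i
    obtain ⟨v, hv, hev⟩ := Finset.mem_image.mp (hft i)
    exact ⟨v, hv, hev⟩
  choose g hgF hge using hg
  have hgidx : ∀ i, idx (g i) = i := by
    intro i
    have := hgF i
    simp [hF] at this
    exact this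
  have hginj : Function.Injective g := by
    intro i j h
    rw [← hgidx i, ← hgidx j, h]
  -- the independent set
  set S : Set V := ↑(Finset.univ.image g) with hS
  have hScard : S.ncard = n := by
    rw [hS, Set.ncard_coe_finset, Finset.card_image_of_injective _ hginj,
      Finset.card_univ, Fintype.card_fin]
  have hSindep : IsIndepSet' G S := by
    intro u hu v hv huv
    simp only [hS, Finset.coe_image, Finset.coe_univ, Set.image_univ, Set.mem_range] at hu hv
    obtain ⟨i, rfl⟩ := hu
    obtain ⟨j, rfl⟩ := hv
    by_cases hij : i = j
    · subst hij; exact G.irrefl huv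
    · have hne : idx (g j) ≠ idx (g i) := by
        rw [hgidx i, hgidx j]; exact fun h => hij (h.symm)
      have : g j = m (g i) := huniq _ _ huv hne
      have hfij : f j = f i := by
        rw [← hge j, ← hge i, he, this]
        show s(m (g i), m (m (g i))) = s(g i, m (g i))
        rw [hmm (g i)]
        exact Sym2.eq_swap
      exact hij (hfinj hfij).symm
  -- upper bound
  have hub : ∀ k ∈ {k : ℕ | ∃ s : Set V, IsIndepSet' G s ∧ s.ncard = k}, k ≤ n := by
    rintro k ⟨s, hsind, rfl⟩
    have hinj : Set.InjOn idx s := by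
      intro u hu v hv h
      by_contra hne
      exact hsind hu hv (hadj u v hne h)
    calc s.ncard = (idx '' s).ncard := (Set.ncard_image_of_injOn hinj).symm
      _ ≤ (Set.univ : Set (Fin n)).ncard :=
          Set.ncard_le_ncard (Set.subset_univ _) Set.finite_univ
      _ = n := by rw [Set.ncard_univ, Nat.card_eq_fintype_card, Fintype.card_fin]
  have hmemn : n ∈ {k : ℕ | ∃ s : Set V, IsIndepSet' G s ∧ s.ncard = k} := ⟨S, hSindep, hScard⟩
  refine le_antisymm (csSup_le ⟨n, hmemn⟩ hub) (le_csSup ⟨n, hub⟩ hmemn)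
end

section
/- Let G ∈ 𝒯 be a graph whose vertex set is partitioned into n vertex-disjoint triangles, and let S be any maximum independent set of G. Then the subgraph of G induced by V(G) \ S is bipartite. -/
open SimpleGraph

section Aux

open Equiv

lemma twoMatching_coloring_aux {X : Type*} (σ τ : Equiv.Perm X)
    (hσ2 : σ * σ = 1) (hτ2 : τ * τ = 1)
    (hσf : ∀ x, σ x ≠ x) (hτf : ∀ x, τ x ≠ x) :
    ∃ c : X → Bool, ∀ x, c (σ x) ≠ c x ∧ c (τ x) ≠ c x := by
  classical
  set g : Equiv.Perm X := τ * σ with hg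
  have hσinv : σ⁻¹ = σ := by
    rw [inv_eq_iff_mul_eq_one]; exact hσ2
  have hc1 : σ * g * σ⁻¹ = g⁻¹ := by
    rw [hσinv, hg, mul_inv_rev, inv_eq_iff_mul_eq_one.mpr hτ2, hσinv]
    calc σ * (τ * σ) * σ = σ * τ * (σ * σ) := by group
    _ = σ * τ := by rw [hσ2, mul_one]
  have hck : ∀ k : ℤ, σ * g ^ k = g ^ (-k) * σ := by
    intro k
    have h1 : σ * g ^ k * σ⁻¹ = (σ * g * σ⁻¹) ^ k := by
      simpa using (map_zpow (MulAut.conj σ) g k).symm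
    rw [hc1, inv_zpow, ← zpow_neg] at h1
    calc σ * g ^ k = σ * g ^ k * σ⁻¹ * σ := by group
    _ = g ^ (-k) * σ := by rw [h1]
  have hτg : τ = g * σ := by
    rw [hg]
    calc τ = τ * (σ * σ) := by rw [hσ2, mul_one]
    _ = τ * σ * σ := by group
  -- key: σ x is never in the same g-cycle as x
  have hK : ∀ x : X, ¬ g.SameCycle x (σ x) := by
    rintro x ⟨k, hk⟩
    have hs : ∀ j : ℤ, σ ((g ^ j) x) = (g ^ (k - j)) x := by
      intro j
      calc σ ((g ^ j) x) = (σ * g ^ j) x := rfl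
      _ = (g ^ (-j) * σ) x := by rw [hck]
      _ = (g ^ (-j)) (σ x) := rfl
      _ = (g ^ (-j)) ((g ^ k) x) := by rw [hk]
      _ = (g ^ (-j) * g ^ k) x := rfl
      _ = (g ^ (k - j)) x := by rw [← zpow_add]; ring_nf
    have ht : ∀ j : ℤ, τ ((g ^ j) x) = (g ^ (k - j + 1)) x := by
      intro j
      calc τ ((g ^ j) x) = (g * σ) ((g ^ j) x) := by rw [← hτg]
      _ = g (σ ((g ^ j) x)) := rfl
      _ = g ((g ^ (k - j)) x) := by rw [hs]
      _ = (g ^ (1 : ℤ) * g ^ (k - j)) x := by simp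
      _ = (g ^ (k - j + 1)) x := by rw [← zpow_add]; ring_nf
    have hall : ∀ t : ℤ, (g ^ t) x ≠ x := by
      intro t h0
      rcases Int.even_or_odd (k - t) with ⟨j, hj⟩ | ⟨j, hj⟩
      · have h1 := hσf ((g ^ j) x)
        rw [hs j] at h1
        apply h1
        have hkj : k - j = j + t := by omega
        rw [hkj, zpow_add]
        calc (g ^ j * g ^ t) x = (g ^ j) ((g ^ t) x) := rfl
        _ = (g ^ j) x := by rw [h0]
      · have h1 := hτf ((g ^ (j + 1)) x)
        rw [ht (j + 1)] at h1
        apply h1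
        have hkj : k - (j + 1) + 1 = (j + 1) + t := by omega
        rw [hkj, zpow_add]
        calc (g ^ (j + 1) * g ^ t) x = (g ^ (j + 1)) ((g ^ t) x) := rfl
        _ = (g ^ (j + 1)) x := by rw [h0]
    exact hall 0 rfl
  have hσσ : ∀ y, σ (σ y) = y := fun y => by
    rw [← Equiv.Perm.mul_apply, hσ2, Equiv.Perm.one_apply]
  have hsc : ∀ x y : X, g.SameCycle x (σ y) → g.SameCycle (σ x) y := by
    rintro x y ⟨k, hk⟩
    refine ⟨-k, ?_⟩
    calc (g ^ (-k)) (σ x) = (g ^ (-k) * σ) x := rfl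
    _ = (σ * g ^ k) x := by rw [hck]
    _ = σ ((g ^ k) x) := rfl
    _ = σ (σ y) := by rw [hk]
    _ = y := hσσ y
  have hsc2 : ∀ x y : X, g.SameCycle x y → g.SameCycle (σ x) (σ y) := by
    intro x y h
    exact hsc x (σ y) (by rwa [hσσ])
  let R : X → X → Prop := fun x y => g.SameCycle x y ∨ g.SameCycle x (σ y)
  have hRequiv : Equivalence R := by
    constructor
    · intro x; exact Or.inl (Equiv.Perm.SameCycle.refl g x)
    · rintro x y (h | h)
      · exact Or.inl h.symm
      · exact Or.inr ((hsc x y h).symm)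
    · rintro x y z (h1 | h1) (h2 | h2)
      · exact Or.inl (h1.trans h2)
      · exact Or.inr (h1.trans h2)
      · exact Or.inr (h1.trans (hsc2 _ _ h2))
      · exact Or.inl (h1.trans (hsc y z h2))
  let sd : Setoid X := ⟨R, hRequiv⟩
  let rep : X → X := fun x => (Quotient.mk sd x).out
  have hrep : ∀ x, R x (rep x) := fun x => Quotient.exact (s := sd) (Quotient.out_eq (Quotient.mk sd x)).symm
  have hrepeq : ∀ x y, R x y → rep x = rep y := fun x y h => by
    simp only [rep]
    rw [Quotient.sound (s := sd) h]
  let c : X → Bool := fun x => decide (g.SameCycle x (rep x))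
  refine ⟨c, fun x => ?_⟩
  have hτx : τ x = g (σ x) := by rw [hτg]; rfl
  have hτσcyc : g.SameCycle (τ x) (σ x) := ⟨-1, by rw [hτx, zpow_neg_one]; simp⟩
  have hRσ : R (σ x) x := Or.inr Equiv.Perm.SameCycle.rfl
  have hRτ : R (τ x) x := Or.inr hτσcyc
  have hrσ : rep (σ x) = rep x := hrepeq _ _ hRσ
  have hrτ : rep (τ x) = rep x := hrepeq _ _ hRτ
  rcases hrep x with hA | hB
  · have hcx : c x = true := decide_eq_true hA
    have hnot : ¬ g.SameCycle (σ x) (rep x) := fun h => hK x (hA.trans h.symm)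
    have hnotτ : ¬ g.SameCycle (τ x) (rep x) := fun h => hnot (hτσcyc.symm.trans h)
    have h1 : c (σ x) = false := by
      simp only [c, hrσ]; exact decide_eq_false hnot
    have h2 : c (τ x) = false := by
      simp only [c, hrτ]; exact decide_eq_false hnotτ
    rw [h1, h2, hcx]; simp
  · have hnx : ¬ g.SameCycle x (rep x) := fun h => hK (rep x) (h.symm.trans hB)
    have hcx : c x = false := decide_eq_false hnx
    have hσr : g.SameCycle (σ x) (rep x) := hsc x (rep x) hB
    have hτr : g.SameCycle (τ x) (rep x) := hτσcyc.trans hσr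
    have h1 : c (σ x) = true := by
      simp only [c, hrσ]; exact decide_eq_true hσr
    have h2 : c (τ x) = true := by
      simp only [c, hrτ]; exact decide_eq_true hτr
    rw [h1, h2, hcx]; simp

lemma twoMatching_coloring {X : Type*} (σ τ : X → X)
    (hσi : Function.Involutive σ) (hτi : Function.Involutive τ)
    (hσf : ∀ x, σ x ≠ x) :
    ∃ c : X → Bool, ∀ x, c (σ x) ≠ c x ∧ (τ x ≠ x → c (τ x) ≠ c x) := by
  classical
  let σ' : X × Bool → X × Bool := fun p => (σ p.1, p.2)
  let τ' : X × Bool → X × Bool := fun p => if τ p.1 = p.1 then (p.1, !p.2) else (τ p.1, p.2)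
  have hσ'i : Function.Involutive σ' := fun p => by simp [σ', hσi p.1]
  have hτ'i : Function.Involutive τ' := by
    intro p
    by_cases h : τ p.1 = p.1
    · simp [τ', h]
    · have h2 : τ (τ p.1) = p.1 := hτi p.1
      have h3 : ¬ τ (τ p.1) = τ p.1 := by rw [h2]; intro hh; exact h hh.symm
      simp only [τ', h, if_neg h, if_neg h3, h2]
  have hσ'f : ∀ p, σ' p ≠ p := fun p hp => hσf p.1 (congrArg Prod.fst hp)
  have hτ'f : ∀ p, τ' p ≠ p := by
    intro p hp
    by_cases h : τ p.1 = p.1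
    · simp [τ', h, Prod.ext_iff] at hp
    · simp [τ', h, Prod.ext_iff] at hp
  obtain ⟨c', hc'⟩ := twoMatching_coloring_aux hσ'i.toPerm hτ'i.toPerm
    (Equiv.ext fun p => by
      rw [Equiv.Perm.mul_apply]
      simp only [Function.Involutive.coe_toPerm]
      rw [hσ'i p]; rfl)
    (Equiv.ext fun p => by
      rw [Equiv.Perm.mul_apply]
      simp only [Function.Involutive.coe_toPerm]
      rw [hτ'i p]; rfl)
    (by simpa only [Function.Involutive.coe_toPerm] using hσ'f)
    (by simpa only [Function.Involutive.coe_toPerm] using hτ'f)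
  refine ⟨fun x => c' (x, false), fun x => ?_⟩
  have h1 := (hc' (x, false)).1
  have h2 := (hc' (x, false)).2
  simp only [Function.Involutive.coe_toPerm] at h1 h2
  constructor
  · exact h1
  · intro hx
    have : τ' (x, false) = (τ x, false) := by simp [τ', hx]
    rwa [this] at h2

open SimpleGraph

set_option maxHeartbeats 1000000 in
theorem induce_compl_maxIndep_bipartite' {V : Type*} [Fintype V] (G : SimpleGraph V)
    (n : ℕ) (idx : V → Fin n)
    (htri : ∀ u v : V, u ≠ v → idx u = idx v → G.Adj u v)
    (hfib : ∀ i : Fin n, (idx ⁻¹' {i}).ncard = 3)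
    (hext : ∀ v : V, {u : V | G.Adj v u ∧ idx u ≠ idx v}.ncard = 1)
    (S : Set V)
    (hS : ∀ ⦃u : V⦄, u ∈ S → ∀ ⦃v : V⦄, v ∈ S → ¬ G.Adj u v)
    (hmax : ∀ T : Set V, (∀ ⦃u : V⦄, u ∈ T → ∀ ⦃v : V⦄, v ∈ T → ¬ G.Adj u v) → T.ncard ≤ S.ncard) :
    (G.induce (Sᶜ : Set V)).Colorable 2 := by
  classical
  -- the external-neighbor involution
  have hm' : ∀ v : V, ∃ w : V, {u : V | G.Adj v u ∧ idx u ≠ idx v} = {w} :=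
    fun v => Set.ncard_eq_one.mp (hext v)
  choose m hm using hm'
  have hmdef : ∀ v, G.Adj v (m v) ∧ idx (m v) ≠ idx v := by
    intro v
    have : m v ∈ {u : V | G.Adj v u ∧ idx u ≠ idx v} := by rw [hm v]; rfl
    exact this
  have hmuniq : ∀ v u, G.Adj v u → idx u ≠ idx v → u = m v := by
    intro v u h1 h2
    have : u ∈ {u : V | G.Adj v u ∧ idx u ≠ idx v} := ⟨h1, h2⟩
    rw [hm v] at this
    exact this
  have hminv : ∀ v, m (m v) = v :=
    fun v => (hmuniq (m v) v (hmdef v).1.symm (Ne.symm (hmdef v).2)).symm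
  -- fibers as finsets
  let Fi : Fin n → Finset V := fun i => Finset.univ.filter (fun v => idx v = i)
  have hFicard : ∀ i, (Fi i).card = 3 := by
    intro i
    have h1 : (idx ⁻¹' {i}) = ↑(Fi i) := by ext v; simp [Fi]
    have := hfib i
    rwa [h1, Set.ncard_coe_finset] at this
  have hmemFi : ∀ v, v ∈ Fi (idx v) := by intro v; simp [Fi]
  -- Part A : an independent transversal exists, so S has ≥ n elements
  let p : V → Sym2 V := fun v => s(v, m v)
  let t : Fin n → Finset (Sym2 V) := fun i => (Fi i).image p
  have hhall : ∀ s : Finset (Fin n), s.card ≤ (s.biUnion t).card := by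
    intro s
    set A : Finset V := Finset.univ.filter (fun v => idx v ∈ s) with hA
    have hA3 : A.card = 3 * s.card := by
      rw [Finset.card_eq_sum_card_fiberwise (f := idx) (s := A) (t := s)
        (fun v hv => (Finset.mem_filter.mp (Finset.mem_coe.mp hv)).2)]
      have he : ∀ i ∈ s, (A.filter fun v => idx v = i).card = 3 := by
        intro i hi
        have : (A.filter fun v => idx v = i) = Fi i := by
          ext v
          simp only [A, Fi, Finset.mem_filter, Finset.mem_univ, true_and]
          constructor
          · exact fun h => h.2
          · exact fun h => ⟨h ▸ hi, h⟩
        rw [this, hFicard]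
      rw [Finset.sum_congr rfl he, Finset.sum_const, smul_eq_mul, mul_comm]
    have himg : ∀ a ∈ A.image p, (A.filter fun v => p v = a).card ≤ 2 := by
      intro a ha
      obtain ⟨v0, hv0, rfl⟩ := Finset.mem_image.mp ha
      have hsub : (A.filter fun v => p v = p v0) ⊆ {v0, m v0} := by
        intro u hu
        have hpu : p u = p v0 := (Finset.mem_filter.mp hu).2
        simp only [p, Sym2.eq_iff] at hpu
        rcases hpu with ⟨h1, _⟩ | ⟨h1, _⟩ <;> simp [h1]
      calc (A.filter fun v => p v = p v0).card ≤ ({v0, m v0} : Finset V).card :=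
            Finset.card_le_card hsub
      _ ≤ 2 := Finset.card_insert_le _ _ |>.trans (by simp)
    have hcard := Finset.card_le_mul_card_image (f := p) A 2 himg
    have hsubU : A.image p ⊆ s.biUnion t := by
      intro a ha
      obtain ⟨v, hv, rfl⟩ := Finset.mem_image.mp ha
      exact Finset.mem_biUnion.mpr
        ⟨idx v, (Finset.mem_filter.mp hv).2, Finset.mem_image_of_mem p (hmemFi v)⟩
    have h2 : A.card ≤ 2 * (s.biUnion t).card :=
      hcard.trans (Nat.mul_le_mul_left 2 (Finset.card_le_card hsubU))
    omega
  obtain ⟨f, hfinj, hf⟩ := (Finset.all_card_le_biUnion_card_iff_exists_injective t).mp hhall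
  have hge : ∀ i, ∃ v, v ∈ Fi i ∧ p v = f i := by
    intro i
    obtain ⟨v, hv, hpv⟩ := Finset.mem_image.mp (hf i)
    exact ⟨v, hv, hpv⟩
  choose gv hgv hpgv using hge
  have hgidx : ∀ i, idx (gv i) = i := fun i => (Finset.mem_filter.mp (hgv i)).2
  have hTind : ∀ ⦃u : V⦄, u ∈ Set.range gv → ∀ ⦃v : V⦄, v ∈ Set.range gv → ¬ G.Adj u v := by
    rintro u ⟨i, rfl⟩ v ⟨j, rfl⟩ hadj
    by_cases hij : i = j
    · subst hij; exact G.loopless.irrefl _ hadj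
    · have h1 : gv j = m (gv i) :=
        hmuniq _ _ hadj (by rw [hgidx, hgidx]; exact fun h => hij h.symm)
      have h2 : gv i = m (gv j) :=
        hmuniq _ _ hadj.symm (by rw [hgidx, hgidx]; exact hij)
      have : f i = f j := by
        rw [← hpgv i, ← hpgv j]
        show s(gv i, m (gv i)) = s(gv j, m (gv j))
        rw [← h1, ← h2]
        exact Sym2.eq_swap
      exact hij (hfinj this)
  have hginj : Function.Injective gv := fun a b h => by rw [← hgidx a, ← hgidx b, h]
  have hn_le : n ≤ S.ncard := by
    have hTcard : (Set.range gv).ncard = n := by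
      have h1 : Set.range gv = ↑(Finset.univ.image gv) := by ext v; simp
      rw [h1, Set.ncard_coe_finset, Finset.card_image_of_injective _ hginj,
        Finset.card_univ, Fintype.card_fin]
    rw [← hTcard]
    exact hmax _ hTind
  -- Part A2 : S contains exactly one vertex of each triangle
  set S' : Finset V := S.toFinset with hS'
  have hS'card : S'.card = S.ncard := (Set.ncard_eq_toFinset_card' S).symm
  have hfir : ∀ i, (S'.filter fun v => idx v = i).card ≤ 1 := by
    intro i
    apply Finset.card_le_one.mpr
    intro a ha b hb
    by_contra hab
    have haS : a ∈ S := Set.mem_toFinset.mp (Finset.mem_filter.mp ha).1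
    have hbS : b ∈ S := Set.mem_toFinset.mp (Finset.mem_filter.mp hb).1
    exact hS haS hbS (htri a b hab (by
      rw [(Finset.mem_filter.mp ha).2, (Finset.mem_filter.mp hb).2]))
  have hsum : S'.card = ∑ i : Fin n, (S'.filter fun v => idx v = i).card :=
    Finset.card_eq_sum_card_fiberwise (fun v _ => Finset.mem_univ (idx v))
  have hone : ∀ i, (S'.filter fun v => idx v = i).card = 1 := by
    intro i0
    by_contra hne
    have h0 : (S'.filter fun v => idx v = i0).card = 0 := by have := hfir i0; omega
    have hrest : ∑ i ∈ Finset.univ.erase i0, (S'.filter fun v => idx v = i).card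
        ≤ (Finset.univ.erase i0).card • 1 :=
      Finset.sum_le_card_nsmul _ _ 1 (fun i _ => hfir i)
    have hcard1 : (Finset.univ.erase i0).card = n - 1 := by
      rw [Finset.card_erase_of_mem (Finset.mem_univ i0), Finset.card_univ, Fintype.card_fin]
    have hsplit : ∑ i : Fin n, (S'.filter fun v => idx v = i).card
        = (S'.filter fun v => idx v = i0).card
          + ∑ i ∈ Finset.univ.erase i0, (S'.filter fun v => idx v = i).card :=
      (Finset.add_sum_erase _ _ (Finset.mem_univ i0)).symm
    have hn1 : 1 ≤ n := Fin.pos i0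
    have := hn_le
    rw [← hS'card, hsum] at this
    rw [hsplit, h0] at this
    simp only [smul_eq_mul, mul_one] at hrest
    omega
  choose sv hsv using fun i => Finset.card_eq_one.mp (hone i)
  have hsvmem : ∀ i, sv i ∈ S ∧ idx (sv i) = i := by
    intro i
    have : sv i ∈ S'.filter fun v => idx v = i := by
      rw [hsv i]; exact Finset.mem_singleton_self _
    exact ⟨Set.mem_toFinset.mp (Finset.mem_filter.mp this).1, (Finset.mem_filter.mp this).2⟩
  have hsvuniq : ∀ v ∈ S, v = sv (idx v) := by
    intro v hv
    have : v ∈ S'.filter fun u => idx u = idx v :=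
      Finset.mem_filter.mpr ⟨Set.mem_toFinset.mpr hv, rfl⟩
    rw [hsv (idx v)] at this
    exact Finset.mem_singleton.mp this
  -- the triangle-mate of a vertex outside S
  have hmate' : ∀ v : V, ∃ w, v ∉ S → ((Fi (idx v)).erase v).erase (sv (idx v)) = {w} := by
    intro v
    by_cases hv : v ∉ S
    · have h1 : sv (idx v) ∈ (Fi (idx v)).erase v := by
        refine Finset.mem_erase.mpr ⟨?_, ?_⟩
        · exact fun h => hv (h ▸ (hsvmem (idx v)).1)
        · simp [Fi, (hsvmem (idx v)).2]
      have h2 : (((Fi (idx v)).erase v).erase (sv (idx v))).card = 1 := by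
        rw [Finset.card_erase_of_mem h1, Finset.card_erase_of_mem (hmemFi v), hFicard]
      obtain ⟨w, hw⟩ := Finset.card_eq_one.mp h2
      exact ⟨w, fun _ => hw⟩
    · exact ⟨v, fun h => absurd h (by simpa using hv)⟩
  choose mate hmate using hmate'
  have hmate_spec : ∀ v ∉ S, mate v ∈ Fi (idx v) ∧ mate v ≠ v ∧ mate v ≠ sv (idx v) := by
    intro v hv
    have : mate v ∈ ((Fi (idx v)).erase v).erase (sv (idx v)) := by
      rw [hmate v hv]; exact Finset.mem_singleton_self _
    have ha := Finset.mem_erase.mp this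
    have hb := Finset.mem_erase.mp ha.2
    exact ⟨hb.2, hb.1, ha.1⟩
  have hmate_uniq : ∀ v ∉ S, ∀ u, idx u = idx v → u ≠ v → u ∉ S → u = mate v := by
    intro v hv u hidx hne huS
    have : u ∈ ((Fi (idx v)).erase v).erase (sv (idx v)) := by
      refine Finset.mem_erase.mpr ⟨?_, Finset.mem_erase.mpr ⟨hne, ?_⟩⟩
      · intro h
        exact huS (h ▸ (hsvmem (idx v)).1)
      · simp [Fi, hidx]
    rw [hmate v hv] at this
    exact Finset.mem_singleton.mp this
  have hmate_notS : ∀ v ∉ S, mate v ∉ S := by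
    intro v hv hmS
    have h1 := hsvuniq _ hmS
    have h2 : idx (mate v) = idx v := by
      have := (hmate_spec v hv).1
      simpa [Fi] using this
    rw [h2] at h1
    exact (hmate_spec v hv).2.2 h1
  have hmate_idx : ∀ v ∉ S, idx (mate v) = idx v := by
    intro v hv
    have := (hmate_spec v hv).1
    simpa [Fi] using this
  have hmate_inv : ∀ v ∉ S, mate (mate v) = v := by
    intro v hv
    have h1 := hmate_notS v hv
    refine (hmate_uniq (mate v) h1 v ?_ ?_ hv).symm
    · exact (hmate_idx v hv).symm
    · exact fun h => (hmate_spec v hv).2.1 h.symm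
  -- set up the two involutions on Sᶜ
  let X := ↥(Sᶜ : Set V)
  have hXmem : ∀ x : X, (x : V) ∉ S := fun x => x.2
  let σX : X → X := fun x => ⟨mate x.1, hmate_notS x.1 (hXmem x)⟩
  let τX : X → X := fun x =>
    if h : m x.1 ∈ S then x else ⟨m x.1, h⟩
  have hσXi : Function.Involutive σX := by
    intro x
    apply Subtype.ext
    exact hmate_inv x.1 (hXmem x)
  have hτXi : Function.Involutive τX := by
    intro x
    by_cases h : m x.1 ∈ S
    · simp only [τX, dif_pos h]
    · simp only [τX, dif_neg h]
      have h2 : m (m x.1) = x.1 := hminv x.1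
      have h3 : ¬ m (m x.1) ∈ S := by rw [h2]; exact hXmem x
      simp only [dif_neg h3]
      exact Subtype.ext h2
  have hσXf : ∀ x, σX x ≠ x := by
    intro x h
    exact (hmate_spec x.1 (hXmem x)).2.1 (congrArg Subtype.val h)
  obtain ⟨c, hc⟩ := twoMatching_coloring σX τX hσXi hτXi hσXf
  refine ⟨SimpleGraph.Coloring.mk (fun x => if c x then 0 else 1) ?_⟩
  intro a b hab
  have hadj : G.Adj (a : V) (b : V) := hab
  have hne : (a : V) ≠ (b : V) := hadj.ne
  have hcab : c a ≠ c b := by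
    by_cases hI : idx (a : V) = idx (b : V)
    · have h1 : (a : V) = mate (b : V) :=
        hmate_uniq (b : V) (hXmem b) (a : V) hI hne (hXmem a)
      have h2 : a = σX b := Subtype.ext h1
      rw [h2]
      exact (hc b).1
    · have hbm : (b : V) = m (a : V) := hmuniq _ _ hadj (fun h => hI h.symm)
      have hmnS : m (a : V) ∉ S := hbm ▸ hXmem b
      have hτ : τX a = b := by
        simp only [τX, dif_neg hmnS]
        exact Subtype.ext hbm.symm
      have hτne : τX a ≠ a := by
        rw [hτ]
        exact fun h => hne (congrArg Subtype.val h).symm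
      have := (hc a).2 hτne
      rw [hτ] at this
      exact fun h => this h.symm
  show (if c a then (0 : Fin 2) else 1) ≠ (if c b then (0 : Fin 2) else 1)
  rcases Bool.eq_false_or_eq_true (c a) with hca | hca <;>
    rcases Bool.eq_false_or_eq_true (c b) with hcb | hcb
  · exact absurd (hca.trans hcb.symm) hcab
  · rw [hca, hcb]; simp
  · rw [hca, hcb]; simp
  · exact absurd (hca.trans hcb.symm) hcab

end Aux

/-- If `G ∈ 𝒯` and `S` is a maximum independent set of `G`, then the subgraph of `G`
induced by `V(G) \ S` is bipartite (i.e. 2-colorable). -/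
theorem induce_compl_maxIndep_bipartite {V : Type*} [Fintype V] (G : SimpleGraph V)
    (n : ℕ) (idx : V → Fin n) (hT : TrianglePartition G n idx) (S : Set V)
    (hS : IsIndepSet' G S) (hmax : ∀ T : Set V, IsIndepSet' G T → T.ncard ≤ S.ncard) :
    (G.induce (Sᶜ : Set V)).Colorable 2 := by
  obtain ⟨htri, hfib, hext⟩ := hT
  exact induce_compl_maxIndep_bipartite' G n idx htri hfib hext S hS hmax
end

section
/- Let G ∈ 𝒯 be a graph whose vertex set is partitioned into n vertex-disjoint triangles, and let S be any maximum independent set of G. Then in the subgraph of G induced by V(G) \ S, no two triangle-edges of G are adjacent and no two non-triangle edges of G are adjacent; consequently every cycle of this induced subgraph alternates between triangle-edges and non-triangle edges and has even length. -/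
open SimpleGraph

lemma walk_support_get {V : Type*} {G : SimpleGraph V} {u v : V} (p : G.Walk u v) :
    ∀ (i : ℕ) (h : i < p.support.length), p.support.get ⟨i, h⟩ = p.getVert i := by
  induction p with
  | nil =>
    intro i h
    simp only [Walk.support_nil, List.length_singleton] at h
    interval_cases i
    · rfl
  | cons ha q ih =>
    intro i h
    cases i with
    | zero => rfl
    | succ i =>
      simp only [Walk.support_cons, Walk.getVert_cons_succ]
      exact ih i (by simpa [Walk.support_cons] using h)

lemma walk_tail_get {V : Type*} {G : SimpleGraph V} {u v : V} (p : G.Walk u v)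
    (i : ℕ) (h : i < p.support.tail.length) :
    p.support.tail.get ⟨i, h⟩ = p.getVert (i + 1) := by
  rw [List.get_tail]
  exact walk_support_get p (i + 1) _

lemma cycle_even {W : Type*} {H : SimpleGraph W} (t : W → W → Prop)
    (halt : ∀ a b c : W, H.Adj a b → H.Adj b c → a ≠ c → (t a b ↔ ¬ t b c))
    {x : W} (p : H.Walk x x) (hp : p.IsCycle) : Even p.length := by
  have hL3 : 3 ≤ p.length := hp.three_le_length
  have hnd : p.support.tail.Nodup := hp.support_nodup
  have hlen : p.support.tail.length = p.length := by
    rw [List.length_tail, p.length_support]; omega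
  have hinj : ∀ i j, i < p.length → j < p.length →
      p.getVert (i + 1) = p.getVert (j + 1) → i = j := by
    intro i j hi hj heq
    have h1 : p.support.tail.get ⟨i, by omega⟩ = p.support.tail.get ⟨j, by omega⟩ := by
      rw [walk_tail_get, walk_tail_get, heq]
    have := (hnd.get_inj_iff).mp h1
    simpa using this
  -- alternation along the walk
  have step : ∀ i, i + 1 < p.length →
      (t (p.getVert i) (p.getVert (i + 1)) ↔ ¬ t (p.getVert (i + 1)) (p.getVert (i + 2))) := by
    intro i hi
    have hadj1 : H.Adj (p.getVert i) (p.getVert (i + 1)) := p.adj_getVert_succ (by omega)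
    have hadj2 : H.Adj (p.getVert (i + 1)) (p.getVert (i + 2)) := by
      have := p.adj_getVert_succ (i := i + 1) (by omega)
      simpa using this
    refine halt _ _ _ hadj1 hadj2 ?_
    rcases Nat.eq_zero_or_pos i with rfl | hpos
    · have h0 : p.getVert 0 = p.getVert p.length := by
        rw [p.getVert_zero, p.getVert_length]
      rw [h0]
      intro hcon
      have := hinj (p.length - 1) 1 (by omega) (by omega)
        (by rw [show p.length - 1 + 1 = p.length by omega]; exact hcon)
      omega
    · obtain ⟨k, rfl⟩ := Nat.exists_eq_succ_of_ne_zero (by omega : i ≠ 0)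
      intro hcon
      have := hinj k (k + 2) (by omega) (by omega)
        (by rw [show k + 2 + 1 = k + 1 + 2 by omega]; exact hcon)
      omega
  have key : ∀ i, i < p.length →
      ((t (p.getVert i) (p.getVert (i + 1))) ↔
        (Even i ↔ t (p.getVert 0) (p.getVert 1))) := by
    intro i
    induction i with
    | zero => intro _; simp
    | succ k ih =>
      intro hk
      have h1 := ih (by omega)
      have h2 := step k hk
      rw [Nat.even_add_one]
      tauto
  have wrap : (t (p.getVert (p.length - 1)) (p.getVert (p.length - 1 + 1)) ↔
      ¬ t (p.getVert 0) (p.getVert 1)) := by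
    have e1 : p.length - 1 + 1 = p.length := by omega
    have hadj1 : H.Adj (p.getVert (p.length - 1)) (p.getVert (p.length - 1 + 1)) :=
      p.adj_getVert_succ (by omega)
    have e0 : p.getVert (p.length - 1 + 1) = p.getVert 0 := by
      rw [e1, p.getVert_length, p.getVert_zero]
    have hadj2 : H.Adj (p.getVert (p.length - 1 + 1)) (p.getVert 1) := by
      rw [e0]
      have := p.adj_getVert_succ (i := 0) (by omega)
      simpa using this
    have hne : p.getVert (p.length - 1) ≠ p.getVert 1 := by
      intro hcon
      have := hinj (p.length - 2) 0 (by omega) (by omega)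
        (by rw [show p.length - 2 + 1 = p.length - 1 by omega]; simpa using hcon)
      omega
    have := halt _ _ _ hadj1 hadj2 hne
    rw [e0] at this ⊢
    exact this
  have hlast := key (p.length - 1) (by omega)
  have hodd : ¬ Even (p.length - 1) := by tauto
  rcases Nat.even_or_odd p.length with he | ho
  · exact he
  · exfalso
    obtain ⟨r, hr⟩ := ho
    exact hodd ⟨r, by omega⟩

lemma exists_transversal {V : Type*} [DecidableEq V] {G : SimpleGraph V} {n : ℕ}
    {idx : V → Fin n} (hT : TrianglePartition G n idx) :
    ∀ (k : ℕ) (A : Finset (Fin n)), A.card ≤ k → ∀ (F : Finset V), F.card ≤ 1 →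
    ∃ X : Finset V,
      (∀ x ∈ X, idx x ∈ A) ∧ (∀ i ∈ A, ∃ x ∈ X, idx x = i) ∧
      (∀ x ∈ X, ∀ y ∈ X, idx x = idx y → x = y) ∧
      (∀ x ∈ X, ∀ y ∈ X, ¬ G.Adj x y) ∧
      (∀ x ∈ X, x ∉ F) := by
  intro k
  induction k with
  | zero =>
    intro A hA F hF
    have hA0 : A = ∅ := Finset.card_eq_zero.mp (Nat.le_zero.mp hA)
    subst hA0
    exact ⟨∅, by simp, by simp, by simp, by simp, by simp⟩
  | succ k ih =>
    intro A hA F hF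
    rcases A.eq_empty_or_nonempty with rfl | hAne
    · exact ⟨∅, by simp, by simp, by simp, by simp, by simp⟩
    obtain ⟨i0, hi0A, hi0F⟩ : ∃ i0 ∈ A, ∀ fv ∈ F, idx fv ∈ A → idx fv = i0 := by
      by_cases h : ∃ fv ∈ F, idx fv ∈ A
      · obtain ⟨fv, hfvF, hfvA⟩ := h
        exact ⟨idx fv, hfvA, fun fv' h1 _ => by
          rw [Finset.card_le_one.mp hF fv' h1 fv hfvF]⟩
      · exact ⟨hAne.choose, hAne.choose_spec, fun fv h1 h2 => absurd ⟨fv, h1, h2⟩ h⟩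
    obtain ⟨a, b, c, hab, hac, hbc, hfib⟩ := Set.ncard_eq_three.mp (hT.2.1 i0)
    have hmem : ∀ y ∈ ({a, b, c} : Set V), idx y = i0 := by
      rw [← hfib]; intro y hy; exact hy
    obtain ⟨x0, hx0i, hx0F⟩ : ∃ x0, idx x0 = i0 ∧ x0 ∉ F := by
      by_cases haF : a ∈ F
      · exact ⟨b, hmem b (by simp),
          fun hbF => hab (Finset.card_le_one.mp hF a haF b hbF)⟩
      · exact ⟨a, hmem a (by simp), haF⟩
    obtain ⟨z, hz⟩ := Set.ncard_eq_one.mp (hT.2.2 x0)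
    obtain ⟨X', hX1, hX2, hX3, hX4, hX5⟩ := ih (A.erase i0)
      (by rw [Finset.card_erase_of_mem hi0A]; omega) {z} (by simp)
    have hX1' : ∀ y ∈ X', idx y ≠ i0 := by
      intro y hy
      exact (Finset.mem_erase.mp (hX1 y hy)).1
    refine ⟨insert x0 X', ?_, ?_, ?_, ?_, ?_⟩
    · intro y hy
      rcases Finset.mem_insert.mp hy with rfl | hy'
      · rw [hx0i]; exact hi0A
      · exact Finset.mem_of_mem_erase (hX1 y hy')
    · intro i hiA
      by_cases hii : i = i0
      · exact ⟨x0, Finset.mem_insert_self _ _, by rw [hx0i, hii]⟩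
      · obtain ⟨y, hy1, hy2⟩ := hX2 i (Finset.mem_erase.mpr ⟨hii, hiA⟩)
        exact ⟨y, Finset.mem_insert_of_mem hy1, hy2⟩
    · intro y hy w hw heq
      rcases Finset.mem_insert.mp hy with rfl | hy' <;>
        rcases Finset.mem_insert.mp hw with rfl | hw'
      · rfl
      · exact ((hX1' w hw') (heq ▸ hx0i)).elim
      · exact ((hX1' y hy') (heq.trans hx0i)).elim
      · exact hX3 y hy' w hw' heq
    · intro y hy w hw hadj
      rcases Finset.mem_insert.mp hy with rfl | hy' <;>
        rcases Finset.mem_insert.mp hw with rfl | hw'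
      · exact hadj.ne rfl
      · have hwne : idx w ≠ idx y := by rw [hx0i]; exact hX1' w hw'
        have : w ∈ {u : V | G.Adj y u ∧ idx u ≠ idx y} := ⟨hadj, hwne⟩
        rw [hz] at this
        exact hX5 w hw' (by simpa using this)
      · have hyne : idx y ≠ idx w := by rw [hx0i]; exact hX1' y hy'
        have : y ∈ {u : V | G.Adj w u ∧ idx u ≠ idx w} := ⟨hadj.symm, hyne⟩
        rw [hz] at this
        exact hX5 y hy' (by simpa using this)
      · exact hX4 y hy' w hw' hadj
    · intro y hy hyF
      rcases Finset.mem_insert.mp hy with rfl | hy'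
      · exact hx0F hyF
      · exact hX1' y hy' (hi0F y hyF (Finset.mem_of_mem_erase (hX1 y hy')))

/-- If `G ∈ 𝒯` and `S` is a maximum independent set of `G`, then in the subgraph
induced by `V(G) \ S` no two triangle-edges are adjacent and no two non-triangle
edges are adjacent (an edge `uv` is a triangle-edge when `idx u = idx v`);
consequently every cycle of this induced subgraph has even length. -/
theorem alternating_cycles_of_trianglePartition {V : Type*} [Fintype V]
    (G : SimpleGraph V) (n : ℕ) (idx : V → Fin n) (hT : TrianglePartition G n idx)
    (S : Set V) (hS : IsIndepSet' G S)
    (hmax : ∀ T : Set V, IsIndepSet' G T → T.ncard ≤ S.ncard) :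
    (∀ u v w : V, u ∉ S → v ∉ S → w ∉ S → u ≠ w → G.Adj u v → G.Adj v w →
      ¬ (idx u = idx v ∧ idx v = idx w) ∧ ¬ (idx u ≠ idx v ∧ idx v ≠ idx w)) ∧
    (∀ (x : (Sᶜ : Set V)) (p : (G.induce (Sᶜ : Set V)).Walk x x),
      p.IsCycle → Even p.length) := by
  classical
  -- uniqueness of the outside neighbor
  have houtuniq : ∀ v u w : V, G.Adj v u → G.Adj v w → idx u ≠ idx v → idx w ≠ idx v →
      u = w := by
    intro v u w h1 h2 h3 h4
    obtain ⟨z, hz⟩ := Set.ncard_eq_one.mp (hT.2.2 v)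
    have hu : u ∈ {u' : V | G.Adj v u' ∧ idx u' ≠ idx v} := ⟨h1, h3⟩
    have hw : w ∈ {u' : V | G.Adj v u' ∧ idx u' ≠ idx v} := ⟨h2, h4⟩
    rw [hz] at hu hw
    exact (Set.mem_singleton_iff.mp hu).trans (Set.mem_singleton_iff.mp hw).symm
  -- an independent transversal of the triangles
  obtain ⟨X, hX1, hX2, hX3, hX4, hX5⟩ :=
    exists_transversal hT Finset.univ.card Finset.univ le_rfl ∅ (by simp)
  have hXind : IsIndepSet' G ↑X := fun u hu v hv hadj => hX4 u hu v hv hadj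
  have hXcard : (↑X : Set V).ncard = n := by
    rw [Set.ncard_coe_finset]
    have himg : X.image idx = Finset.univ := by
      apply Finset.eq_univ_of_forall
      intro i
      obtain ⟨x, hx, hxi⟩ := hX2 i (Finset.mem_univ i)
      exact Finset.mem_image.mpr ⟨x, hx, hxi⟩
    have hcimg : X.card = (X.image idx).card :=
      (Finset.card_image_of_injOn (fun x hx y hy => hX3 x hx y hy)).symm
    rw [hcimg, himg, Finset.card_univ, Fintype.card_fin]
  have hn_le : n ≤ S.ncard := by rw [← hXcard]; exact hmax ↑X hXind
  have hSinj : Set.InjOn idx S := by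
    intro u hu v hv heq
    by_contra hne
    exact hS hu hv (hT.1 u v hne heq)
  have himg_univ : idx '' S = Set.univ := by
    apply Set.eq_of_subset_of_ncard_le (Set.subset_univ _) ?_ (Set.finite_univ)
    rw [Set.ncard_univ, Nat.card_eq_fintype_card, Fintype.card_fin,
      Set.ncard_image_of_injOn hSinj]
    exact hn_le
  have hmeet : ∀ i : Fin n, ∃ s ∈ S, idx s = i := by
    intro i
    have : i ∈ idx '' S := himg_univ ▸ Set.mem_univ i
    obtain ⟨s, hs1, hs2⟩ := this
    exact ⟨s, hs1, hs2⟩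
  have part1 : ∀ u v w : V, u ∉ S → v ∉ S → w ∉ S → u ≠ w → G.Adj u v → G.Adj v w →
      ¬ (idx u = idx v ∧ idx v = idx w) ∧ ¬ (idx u ≠ idx v ∧ idx v ≠ idx w) := by
    intro u v w hu hv hw huw h1 h2
    constructor
    · rintro ⟨e1, e2⟩
      have huv : u ≠ v := h1.ne
      have hvw : v ≠ w := h2.ne
      have hsub : ({u, v, w} : Set V) ⊆ idx ⁻¹' {idx u} := by
        intro y hy
        rcases hy with rfl | rfl | rfl
        · exact rfl
        · exact e1.symm
        · exact (e1.trans e2).symm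
      have hcard3 : ({u, v, w} : Set V).ncard = 3 :=
        Set.ncard_eq_three.mpr ⟨u, v, w, huv, huw, hvw, rfl⟩
      have heq : ({u, v, w} : Set V) = idx ⁻¹' {idx u} :=
        Set.eq_of_subset_of_ncard_le hsub (by rw [hT.2.1, hcard3]) (Set.toFinite _)
      obtain ⟨s, hsS, hsi⟩ := hmeet (idx u)
      have hsmem : s ∈ ({u, v, w} : Set V) := by
        rw [heq]
        exact hsi
      rcases hsmem with rfl | rfl | rfl
      · exact hu hsS
      · exact hv hsS
      · exact hw hsS
    · rintro ⟨e1, e2⟩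
      exact huw (houtuniq v u w h1.symm h2 e1 (Ne.symm e2))
  refine ⟨part1, ?_⟩
  intro x p hp
  refine cycle_even (fun a b : (Sᶜ : Set V) => idx a.1 = idx b.1) ?_ p hp
  intro a b c hab hbc hac
  have h1 : G.Adj a.1 b.1 := hab
  have h2 : G.Adj b.1 c.1 := hbc
  have hac' : a.1 ≠ c.1 := fun h => hac (Subtype.ext h)
  obtain ⟨n1, n2⟩ := part1 a.1 b.1 c.1 a.2 b.2 c.2 hac' h1 h2
  constructor
  · intro h h'
    exact n1 ⟨h, h'⟩
  · intro h
    by_contra h'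
    exact n2 ⟨h', h⟩
end

section
/- For m ≥ 0, the graph K4(m) obtained from K_4 by subdividing one edge m times has a dynamic 3-coloring if and only if m ≡ 2 (mod 3). In particular, if m ≡ 0 or 1 (mod 3), then χ_d(K4(m)) > 3. -/
open SimpleGraph

/-- `K4sub m`: the graph obtained from `K_4` on `{a, b, c, d}` by subdividing the edge
`ab` `m` times. Vertices: `Sum.inl i` for `i : Fin (m+2)` is the path
`a = p_0, w_1, …, w_m, b = p_{m+1}`, and `Sum.inr 0 = c`, `Sum.inr 1 = d`. -/
def K4sub (m : ℕ) : SimpleGraph (Fin (m + 2) ⊕ Fin 2) :=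
  SimpleGraph.fromRel (fun x y =>
    match x, y with
    | Sum.inl i, Sum.inl j => (i : ℕ) + 1 = (j : ℕ)
    | Sum.inl i, Sum.inr _ => (i : ℕ) = 0 ∨ (i : ℕ) = m + 1
    | Sum.inr _, Sum.inl _ => False
    | Sum.inr _, Sum.inr _ => True)

/-- `pv m i` is the path vertex `p_i` (for `i ≤ m+1`). -/
def pv (m i : ℕ) : Fin (m + 2) ⊕ Fin 2 :=
  Sum.inl ⟨i % (m + 2), Nat.mod_lt _ (by omega)⟩

lemma pv_adj (m i : ℕ) (h : i + 1 ≤ m + 1) :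
    (K4sub m).Adj (pv m i) (pv m (i + 1)) := by
  have h1 : i % (m + 2) = i := Nat.mod_eq_of_lt (by omega)
  have h2 : (i + 1) % (m + 2) = i + 1 := Nat.mod_eq_of_lt (by omega)
  rw [K4sub, fromRel_adj]
  refine ⟨by simp [pv, Fin.ext_iff, h1, h2], Or.inl ?_⟩
  simp [pv, h1, h2]

lemma pv_adj_inr (m i : ℕ) (h : i = 0 ∨ i = m + 1) (t : Fin 2) :
    (K4sub m).Adj (pv m i) (Sum.inr t) := by
  have h1 : i % (m + 2) = i := Nat.mod_eq_of_lt (by omega)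
  rw [K4sub, fromRel_adj]
  refine ⟨by simp [pv], Or.inl ?_⟩
  simp [pv, h1, h]

lemma inr_adj (m : ℕ) : (K4sub m).Adj (Sum.inr (0 : Fin 2)) (Sum.inr 1) := by
  rw [K4sub, fromRel_adj]
  exact ⟨by simp, Or.inl trivial⟩

lemma internal_nbr (m i : ℕ) (h1 : 1 ≤ i) (h2 : i ≤ m) {u}
    (hu : (K4sub m).Adj (pv m i) u) : u = pv m (i - 1) ∨ u = pv m (i + 1) := by
  have hi : i % (m + 2) = i := Nat.mod_eq_of_lt (by omega)
  have hi1 : (i - 1) % (m + 2) = i - 1 := Nat.mod_eq_of_lt (by omega)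
  have hi2 : (i + 1) % (m + 2) = i + 1 := Nat.mod_eq_of_lt (by omega)
  rw [K4sub, fromRel_adj] at hu
  obtain ⟨hne, hr⟩ := hu
  cases u with
  | inl j =>
    simp only [pv] at hr ⊢
    have : i + 1 = (j : ℕ) ∨ (j : ℕ) + 1 = i := by
      simpa [hi] using hr
    rcases this with h | h
    · right; congr 1
      refine Fin.ext ?_
      show (j : ℕ) = (i + 1) % (m + 2)
      omega
    · left; congr 1
      refine Fin.ext ?_
      show (j : ℕ) = (i - 1) % (m + 2)
      omega
  | inr t =>
    exfalso
    simp only [pv] at hr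
    rcases hr with hr | hr
    · omega
    · exact hr

lemma internal_three (m : ℕ) {c : (Fin (m + 2) ⊕ Fin 2) → Fin 3}
    (hc : IsDynamicColoring (K4sub m) 3 c) (i : ℕ) (h1 : 1 ≤ i) (h2 : i ≤ m) :
    c (pv m (i - 1)) ≠ c (pv m (i + 1)) := by
  have hadj1 : (K4sub m).Adj (pv m i) (pv m (i - 1)) := by
    have h := pv_adj m (i - 1) (by omega)
    rw [show i - 1 + 1 = i from by omega] at h
    exact h.symm
  have hadj2 : (K4sub m).Adj (pv m i) (pv m (i + 1)) := pv_adj m i (by omega)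
  have hne : pv m (i - 1) ≠ pv m (i + 1) := by
    have hi1 : (i - 1) % (m + 2) = i - 1 := Nat.mod_eq_of_lt (by omega)
    have hi2 : (i + 1) % (m + 2) = i + 1 := Nat.mod_eq_of_lt (by omega)
    simp only [pv, ne_eq, Sum.inl.injEq, Fin.mk.injEq, hi1, hi2]
    omega
  have hcard : 2 ≤ ((K4sub m).neighborSet (pv m i)).ncard := by
    have hsub : ({pv m (i - 1), pv m (i + 1)} : Set _) ⊆
        (K4sub m).neighborSet (pv m i) := by
      intro x hx
      rcases hx with rfl | rfl
      · exact hadj1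
      · exact hadj2
    calc 2 = ({pv m (i - 1), pv m (i + 1)} : Set _).ncard :=
          (Set.ncard_pair hne).symm
      _ ≤ _ := Set.ncard_le_ncard hsub (Set.toFinite _)
  obtain ⟨u, w, hu, hw, hcw⟩ := hc.2 (pv m i) hcard
  rcases internal_nbr m i h1 h2 hu with rfl | rfl <;>
    rcases internal_nbr m i h1 h2 hw with rfl | rfl
  · exact absurd rfl hcw
  · exact hcw
  · exact hcw.symm
  · exact absurd rfl hcw

lemma step3 (m : ℕ) {c : (Fin (m + 2) ⊕ Fin 2) → Fin 3}
    (hc : IsDynamicColoring (K4sub m) 3 c) (i : ℕ) (h : i + 3 ≤ m + 1) :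
    c (pv m (i + 3)) = c (pv m i) := by
  have d01 : c (pv m i) ≠ c (pv m (i + 1)) := hc.1 (pv_adj m i (by omega))
  have d12 : c (pv m (i + 1)) ≠ c (pv m (i + 2)) := hc.1 (pv_adj m (i + 1) (by omega))
  have d23 : c (pv m (i + 2)) ≠ c (pv m (i + 3)) := hc.1 (pv_adj m (i + 2) (by omega))
  have d02 : c (pv m i) ≠ c (pv m (i + 2)) := by
    have h' := internal_three m hc (i + 1) (by omega) (by omega)
    simpa using h'
  have d13 : c (pv m (i + 1)) ≠ c (pv m (i + 3)) := by
    have h' := internal_three m hc (i + 2) (by omega) (by omega)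
    simpa using h'
  have l0 := (c (pv m i)).isLt
  have l1 := (c (pv m (i + 1))).isLt
  have l2 := (c (pv m (i + 2))).isLt
  have l3 := (c (pv m (i + 3))).isLt
  rw [Fin.ext_iff]
  rw [Ne, Fin.ext_iff] at d01 d12 d23 d02 d13
  omega

lemma period (m : ℕ) {c : (Fin (m + 2) ⊕ Fin 2) → Fin 3}
    (hc : IsDynamicColoring (K4sub m) 3 c) :
    ∀ k i, i + 3 * k ≤ m + 1 → c (pv m (i + 3 * k)) = c (pv m i) := by
  intro k
  induction k with
  | zero => intro i _; simp
  | succ k ih =>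
    intro i h
    have h1 : i + 3 * (k + 1) = (i + 3) + 3 * k := by ring
    rw [h1, ih (i + 3) (by omega)]
    exact step3 m hc i (by omega)

lemma K4sub_forward (m : ℕ) {c : (Fin (m + 2) ⊕ Fin 2) → Fin 3}
    (hc : IsDynamicColoring (K4sub m) 3 c) : m % 3 = 2 := by
  have hCD := hc.1 (inr_adj m)
  have haC := hc.1 (pv_adj_inr m 0 (Or.inl rfl) 0)
  have haD := hc.1 (pv_adj_inr m 0 (Or.inl rfl) 1)
  have hbC := hc.1 (pv_adj_inr m (m + 1) (Or.inr rfl) 0)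
  have hbD := hc.1 (pv_adj_inr m (m + 1) (Or.inr rfl) 1)
  have l0 := (c (pv m 0)).isLt
  have l1 := (c (pv m (m + 1))).isLt
  have lC := (c (Sum.inr (0 : Fin 2))).isLt
  have lD := (c (Sum.inr (1 : Fin 2))).isLt
  rcases Nat.eq_zero_or_pos m with rfl | hm
  · exfalso
    have hab := hc.1 (pv_adj 0 0 (by omega))
    rw [Ne, Fin.ext_iff] at hCD haC haD hbC hbD hab
    omega
  · have hab : c (pv m 0) = c (pv m (m + 1)) := by
      rw [Ne, Fin.ext_iff] at hCD haC haD hbC hbD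
      rw [Fin.ext_iff]
      omega
    by_contra hm2
    have hcase : m % 3 = 0 ∨ m % 3 = 1 := by omega
    rcases hcase with h0 | h1
    · have hp := period m hc (m / 3) 1 (by omega)
      rw [show 1 + 3 * (m / 3) = m + 1 from by omega] at hp
      have d := hc.1 (pv_adj m 0 (by omega))
      exact d (hab.trans hp)
    · have hp := period m hc (m / 3) 2 (by omega)
      rw [show 2 + 3 * (m / 3) = m + 1 from by omega] at hp
      have d := internal_three m hc 1 le_rfl hm
      norm_num at d
      exact d (hab.trans hp)

lemma K4sub_backward (m : ℕ) (hm : m % 3 = 2) :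
    ∃ c : (Fin (m + 2) ⊕ Fin 2) → Fin 3, IsDynamicColoring (K4sub m) 3 c := by
  refine ⟨fun x => match x with
    | Sum.inl i => ⟨(i : ℕ) % 3, Nat.mod_lt _ (by omega)⟩
    | Sum.inr t => ⟨(t : ℕ) + 1, by omega⟩, ?_, ?_⟩
  · intro u v huv
    rw [K4sub, fromRel_adj] at huv
    obtain ⟨hne, hr⟩ := huv
    cases u with
    | inl i =>
      cases v with
      | inl j =>
        have : (i : ℕ) + 1 = (j : ℕ) ∨ (j : ℕ) + 1 = (i : ℕ) := by simpa using hr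
        simp only [Ne, Fin.ext_iff]
        omega
      | inr t =>
        have : (i : ℕ) = 0 ∨ (i : ℕ) = m + 1 := by simpa using hr
        simp only [Ne, Fin.ext_iff]
        omega
    | inr t =>
      cases v with
      | inl j =>
        have : (j : ℕ) = 0 ∨ (j : ℕ) = m + 1 := by simpa using hr
        simp only [Ne, Fin.ext_iff]
        omega
      | inr s =>
        have hts : (t : ℕ) ≠ (s : ℕ) := by
          intro h; exact hne (by simp [Fin.ext_iff, h])
        simp only [Ne, Fin.ext_iff]
        omega
  · intro v _
    cases v with
    | inl i =>
      by_cases hi : (i : ℕ) = 0 ∨ (i : ℕ) = m + 1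
      · refine ⟨Sum.inr 0, Sum.inr 1, ?_, ?_, ?_⟩
        · rw [K4sub, fromRel_adj]
          exact ⟨by simp, Or.inl (by simpa using hi)⟩
        · rw [K4sub, fromRel_adj]
          exact ⟨by simp, Or.inl (by simpa using hi)⟩
        · simp [Fin.ext_iff]
      · push_neg at hi
        have hlt := i.isLt
        refine ⟨Sum.inl ⟨(i : ℕ) - 1, by omega⟩, Sum.inl ⟨(i : ℕ) + 1, by omega⟩,
          ?_, ?_, ?_⟩
        · rw [K4sub, fromRel_adj]
          refine ⟨by simp only [ne_eq, Sum.inl.injEq, Fin.ext_iff]; omega, Or.inr ?_⟩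
          show (i : ℕ) - 1 + 1 = (i : ℕ)
          omega
        · rw [K4sub, fromRel_adj]
          refine ⟨by simp only [ne_eq, Sum.inl.injEq, Fin.ext_iff]; omega, Or.inl ?_⟩
          show (i : ℕ) + 1 = (i : ℕ) + 1
          rfl
        · simp only [Ne, Fin.ext_iff]
          obtain ⟨h1, h2⟩ := hi
          omega
    | inr t =>
      have hlt := t.isLt
      refine ⟨Sum.inl ⟨0, by omega⟩, Sum.inr ⟨1 - (t : ℕ), by omega⟩, ?_, ?_, ?_⟩
      · rw [K4sub, fromRel_adj]
        exact ⟨by simp, Or.inr (Or.inl (by simp))⟩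
      · rw [K4sub, fromRel_adj]
        refine ⟨?_, Or.inl trivial⟩
        simp only [ne_eq, Sum.inr.injEq, Fin.ext_iff]
        omega
      · simp only [Ne, Fin.ext_iff]
        omega

/-- The graph obtained from `K_4` by subdividing one edge `m` times has a dynamic
3-coloring iff `m ≡ 2 (mod 3)`; in particular, if `m ≡ 0` or `1 (mod 3)` then
`χ_d > 3`. -/
theorem K4sub_dynamic_three_colorable_iff (m : ℕ) :
    ((∃ c : (Fin (m + 2) ⊕ Fin 2) → Fin 3, IsDynamicColoring (K4sub m) 3 c) ↔
      m % 3 = 2) ∧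
    ((m % 3 = 0 ∨ m % 3 = 1) → 3 < dynamicChromaticNumber (K4sub m)) := by
  have part1 : (∃ c : (Fin (m + 2) ⊕ Fin 2) → Fin 3,
      IsDynamicColoring (K4sub m) 3 c) ↔ m % 3 = 2 :=
    ⟨fun ⟨c, hc⟩ => K4sub_forward m hc, K4sub_backward m⟩
  refine ⟨part1, fun h => ?_⟩
  have hmem : ∃ c : (Fin (m + 2) ⊕ Fin 2) → Fin (m + 4),
      IsDynamicColoring (K4sub m) (m + 4) c := by
    refine ⟨fun x => Fin.cast (by omega) (finSumFinEquiv x), ?_, ?_⟩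
    · intro u v huv hcc
      exact huv.ne (finSumFinEquiv.injective (Fin.cast_injective _ hcc))
    · intro v hv
      obtain ⟨u, w, hu, hw, huw⟩ :=
        (Set.one_lt_ncard_iff (Set.toFinite _)).1 (lt_of_lt_of_le one_lt_two hv)
      exact ⟨u, w, hu, hw, fun he =>
        huw (finSumFinEquiv.injective (Fin.cast_injective _ he))⟩
  by_contra hle
  push_neg at hle
  have hne : {k : ℕ | ∃ c : (Fin (m + 2) ⊕ Fin 2) → Fin k,
      IsDynamicColoring (K4sub m) k c}.Nonempty := ⟨m + 4, hmem⟩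
  have hs := Nat.sInf_mem hne
  rw [dynamicChromaticNumber] at hle
  obtain ⟨c, hc1, hc2⟩ := hs
  have : m % 3 = 2 := part1.1 ⟨Fin.castLE hle ∘ c, ?_, ?_⟩
  · omega
  · intro u v huv hcc
    exact hc1 huv (Fin.castLE_injective _ hcc)
  · intro v hv
    obtain ⟨u, w, h1, h2, h3⟩ := hc2 v hv
    exact ⟨u, w, h1, h2, fun he => h3 (Fin.castLE_injective _ he)⟩
end
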